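/- arXiv:2206.08279 — 5 statements merged into one kernel-verified Lean document; each statement's English description precedes it below -/
import Mathlib

section
/- Let μ be a finite positive Borel measure on the unit circle T with infinite support, K_n its Christoffel kernel, and for w ∈ T let B_{n+1}(w,z) := (1 − conj(w) z) K_n(w,z) be the para-orthogonal polynomial. If ζ and ξ are two distinct points of T that are both zeros of B_{n+1}(w,·), then K_n(ζ, ξ) = 0. -/
open MeasureTheory Polynomial Filter
open scoped ComplexConjugate Topology

/-- The Christoffel kernel `K_n(w,z) = ∑_{j=0}^n conj(φ_j(w)) φ_j(z)`. -/
noncomputable def christoffelK (φ : ℕ → Polynomial ℂ) (n : ℕ) (w z : ℂ) : ℂ :=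
  ∑ j ∈ Finset.range (n + 1), conj ((φ j).eval w) * (φ j).eval z

/-- The para-orthogonal polynomial `B_{n+1}(w,z) = (1 − conj(w) z) K_n(w,z)`. -/
noncomputable def paraOrtho (φ : ℕ → Polynomial ℂ) (n : ℕ) (w z : ℂ) : ℂ :=
  (1 - conj w * z) * christoffelK φ n w z


-- auxiliary
noncomputable def pInn (μ : Measure ℂ) (p q : Polynomial ℂ) : ℂ :=
  ∫ z, p.eval z * conj (q.eval z) ∂μ

lemma ae_sphere (μ : Measure ℂ) (hμT : μ (Metric.sphere (0 : ℂ) 1)ᶜ = 0) :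
    ∀ᵐ z ∂μ, z ∈ Metric.sphere (0:ℂ) 1 := by
  rw [ae_iff]
  convert hμT using 2
  ext z; simp

lemma int_poly (μ : Measure ℂ) [IsFiniteMeasure μ]
    (hμT : μ (Metric.sphere (0 : ℂ) 1)ᶜ = 0) (p q : Polynomial ℂ) :
    Integrable (fun z => p.eval z * conj (q.eval z)) μ := by
  set f : ℂ → ℂ := fun z => p.eval z * conj (q.eval z) with hf
  have hcont : Continuous f := by
    exact (p.continuous).mul (Complex.continuous_conj.comp q.continuous)
  obtain ⟨C, hC⟩ : ∃ C, ∀ z ∈ Metric.sphere (0:ℂ) 1, ‖f z‖ ≤ C := by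
    obtain ⟨C, hC⟩ := (isCompact_sphere (0:ℂ) 1).exists_bound_of_continuousOn
      hcont.continuousOn
    exact ⟨C, hC⟩
  refine (integrable_const C).mono' hcont.aestronglyMeasurable ?_
  filter_upwards [ae_sphere μ hμT] with z hz
  exact hC z hz

section ctx
variable (μ : Measure ℂ) [IsFiniteMeasure μ]
    (hμT : μ (Metric.sphere (0 : ℂ) 1)ᶜ = 0)
include hμT
set_option linter.unusedSectionVars false

lemma pInn_add_left (p p' q : Polynomial ℂ) :
    pInn μ (p + p') q = pInn μ p q + pInn μ p' q := by
  unfold pInn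
  rw [← integral_add (int_poly μ hμT p q) (int_poly μ hμT p' q)]
  simp [add_mul]

lemma pInn_sub_left (p p' q : Polynomial ℂ) :
    pInn μ (p - p') q = pInn μ p q - pInn μ p' q := by
  unfold pInn
  rw [← integral_sub (int_poly μ hμT p q) (int_poly μ hμT p' q)]
  simp [sub_mul]

lemma pInn_C_mul_left (c : ℂ) (p q : Polynomial ℂ) :
    pInn μ (C c * p) q = c * pInn μ p q := by
  unfold pInn
  rw [← integral_const_mul]
  simp [mul_assoc]

lemma pInn_conj (p q : Polynomial ℂ) : pInn μ p q = conj (pInn μ q p) := by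
  unfold pInn
  rw [← integral_conj]
  congr 1; funext z
  rw [RingHom.map_mul, Complex.conj_conj]; ring

lemma pInn_C_mul_right (c : ℂ) (p q : Polynomial ℂ) :
    pInn μ p (C c * q) = conj c * pInn μ p q := by
  unfold pInn
  rw [← integral_const_mul]
  congr 1; funext z; simp; ring

lemma pInn_sum_left {α : Type*} (s : Finset α) (f : α → Polynomial ℂ) (q : Polynomial ℂ) :
    pInn μ (∑ i ∈ s, f i) q = ∑ i ∈ s, pInn μ (f i) q := by
  unfold pInn
  rw [← integral_finset_sum]
  · congr 1; funext z
    rw [eval_finset_sum, Finset.sum_mul]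
  · exact fun i _ => int_poly μ hμT (f i) q

lemma pInn_shift (p q : Polynomial ℂ) :
    pInn μ (X * p) (X * q) = pInn μ p q := by
  unfold pInn
  apply integral_congr_ae
  filter_upwards [ae_sphere μ hμT] with z hz
  rw [mem_sphere_zero_iff_norm] at hz
  have h1 : conj z * z = 1 := by rw [Complex.conj_mul', hz]; norm_num
  simp only [eval_mul, eval_X, map_mul]
  calc z * eval z p * (conj z * conj (eval z q))
      = (conj z * z) * (eval z p * conj (eval z q)) := by ring
    _ = eval z p * conj (eval z q) := by rw [h1, one_mul]

end ctx

section basis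
variable (φ : ℕ → Polynomial ℂ)
    (hdeg : ∀ k, (φ k).degree = (k : ℕ))
    (hlead : ∀ k, 0 < ((φ k).leadingCoeff).re ∧ ((φ k).leadingCoeff).im = 0)

include hlead in
lemma lead_ne (k : ℕ) : (φ k).leadingCoeff ≠ 0 := by
  intro h
  have := (hlead k).1
  rw [h] at this
  simp at this

include hdeg hlead in
lemma exp_basis : ∀ (k : ℕ) (p : Polynomial ℂ), p.degree ≤ (k : ℕ) →
    ∃ a : ℕ → ℂ, p = ∑ j ∈ Finset.range (k+1), C (a j) * φ j := by
  intro k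
  induction k with
  | zero =>
    intro p hp
    have hd : (φ 0).natDegree = 0 := natDegree_eq_of_degree_eq_some (hdeg 0)
    have h0 : φ 0 = C ((φ 0).leadingCoeff) := by
      conv_lhs => rw [Polynomial.eq_C_of_natDegree_le_zero (le_of_eq hd)]
      rw [Polynomial.leadingCoeff, hd]
    refine ⟨fun _ => p.coeff 0 / (φ 0).leadingCoeff, ?_⟩
    rw [Finset.sum_range_one]
    simp only []
    conv_rhs => rw [h0]
    rw [← C_mul, leadingCoeff_C, div_mul_cancel₀ _ (lead_ne φ hlead 0)]
    exact Polynomial.eq_C_of_degree_le_zero (by exact_mod_cast hp)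
  | succ k ih =>
    intro p hp
    set c := (φ (k+1)).leadingCoeff with hc
    have hnd : (φ (k+1)).natDegree = k+1 := natDegree_eq_of_degree_eq_some (by exact_mod_cast hdeg (k+1))
    have hφc : (φ (k+1)).coeff (k+1) = c := by rw [hc, Polynomial.leadingCoeff, hnd]
    set b := p.coeff (k+1) / c with hb
    set q := p - C b * φ (k+1) with hq
    have hqdeg : q.degree ≤ (k : ℕ) := by
      refine Polynomial.degree_le_iff_coeff_zero _ _ |>.mpr ?_
      intro m hm
      have hmk : (k : ℕ) < m := by exact_mod_cast hm
      rcases eq_or_lt_of_le (Nat.succ_le_of_lt hmk) with h | h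
      · rw [hq]
        simp only [coeff_sub, coeff_C_mul]
        rw [← h, hφc, hb, div_mul_cancel₀ _ (lead_ne φ hlead (k+1)), sub_self]
      · rw [hq]
        simp only [coeff_sub, coeff_C_mul]
        have h1 : p.coeff m = 0 := by
          apply Polynomial.coeff_eq_zero_of_degree_lt
          exact lt_of_le_of_lt hp (by exact_mod_cast h)
        have h2 : (φ (k+1)).coeff m = 0 := by
          apply Polynomial.coeff_eq_zero_of_degree_lt
          rw [hdeg (k+1)]
          exact_mod_cast h
        rw [h1, h2, mul_zero, sub_self]
    obtain ⟨a, ha⟩ := ih q hqdeg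
    refine ⟨fun j => if j = k+1 then b else a j, ?_⟩
    rw [Finset.sum_range_succ]
    have h1 : ∑ j ∈ Finset.range (k+1), C (if j = k+1 then b else a j) * φ j
        = ∑ j ∈ Finset.range (k+1), C (a j) * φ j := by
      apply Finset.sum_congr rfl
      intro j hj
      rw [Finset.mem_range] at hj
      rw [if_neg (by omega)]
    rw [h1]
    simp only [if_pos rfl]
    rw [← ha, hq]
    abel_nf
    simp

end basis

noncomputable def Kp (φ : ℕ → Polynomial ℂ) (n : ℕ) (x : ℂ) : Polynomial ℂ :=
  ∑ j ∈ Finset.range (n+1), C (conj ((φ j).eval x)) * φ j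

lemma Kp_eval (φ : ℕ → Polynomial ℂ) (n : ℕ) (x z : ℂ) :
    (Kp φ n x).eval z = christoffelK φ n x z := by
  simp [Kp, christoffelK, eval_finset_sum]

lemma Ksymm (φ : ℕ → Polynomial ℂ) (n : ℕ) (x y : ℂ) :
    christoffelK φ n x y = conj (christoffelK φ n y x) := by
  unfold christoffelK
  rw [map_sum]
  apply Finset.sum_congr rfl
  intro j _
  rw [map_mul, Complex.conj_conj]
  ring

lemma degKp (φ : ℕ → Polynomial ℂ) (hdeg : ∀ k, (φ k).degree = (k : ℕ)) (n : ℕ) (x : ℂ) :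
    (Kp φ n x).degree ≤ (n : ℕ) := by
  refine le_trans (Polynomial.degree_sum_le _ _) ?_
  refine Finset.sup_le ?_
  intro j hj
  rw [Finset.mem_range] at hj
  refine le_trans (Polynomial.degree_mul_le _ _) ?_
  have h1 : (C (conj ((φ j).eval x))).degree ≤ 0 := Polynomial.degree_C_le
  have h2 : (φ j).degree ≤ (n:ℕ) := by
    rw [hdeg j]; exact_mod_cast Nat.lt_succ_iff.mp hj
  calc (C (conj ((φ j).eval x))).degree + (φ j).degree ≤ 0 + (n:ℕ) :=
        add_le_add h1 h2
    _ = (n : ℕ) := zero_add _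

section repro
variable (μ : Measure ℂ) [IsFiniteMeasure μ]
    (hμT : μ (Metric.sphere (0 : ℂ) 1)ᶜ = 0)
    (φ : ℕ → Polynomial ℂ)
    (hdeg : ∀ k, (φ k).degree = (k : ℕ))
    (hlead : ∀ k, 0 < ((φ k).leadingCoeff).re ∧ ((φ k).leadingCoeff).im = 0)
    (horth : ∀ k m, ∫ z, (φ k).eval z * conj ((φ m).eval z) ∂μ
        = if k = m then 1 else 0)
    (n : ℕ)
set_option linter.unusedSectionVars false

include hμT in
lemma pInn_right_Kp (p : Polynomial ℂ) (x : ℂ) :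
    pInn μ p (Kp φ n x) = ∑ j ∈ Finset.range (n+1), (φ j).eval x * pInn μ p (φ j) := by
  rw [pInn_conj μ hμT, Kp, pInn_sum_left μ hμT, map_sum]
  apply Finset.sum_congr rfl
  intro j _
  rw [pInn_C_mul_left μ hμT, map_mul, Complex.conj_conj, ← pInn_conj μ hμT]

include hμT hdeg hlead horth in
lemma repro_mono (x : ℂ) (k : ℕ) (hk : k ≤ n) :
    pInn μ (X^k) (Kp φ n x) = x^k := by
  obtain ⟨a, ha⟩ := exp_basis φ hdeg hlead k (X^k) (le_of_eq (degree_X_pow k))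
  have hphi : ∀ j, pInn μ (X^k) (φ j) = if j ∈ Finset.range (k+1) then a j else 0 := by
    intro j
    rw [ha, pInn_sum_left μ hμT]
    have : ∀ i ∈ Finset.range (k+1),
        pInn μ (C (a i) * φ i) (φ j) = if i = j then a i else 0 := by
      intro i _
      rw [pInn_C_mul_left μ hμT]
      have : pInn μ (φ i) (φ j) = if i = j then 1 else 0 := horth i j
      rw [this]
      by_cases h : i = j <;> simp [h]
    rw [Finset.sum_congr rfl this, Finset.sum_ite_eq' (Finset.range (k+1)) j a]
  rw [pInn_right_Kp μ hμT φ n]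
  have hsum : ∑ j ∈ Finset.range (n+1), (φ j).eval x * pInn μ (X^k) (φ j)
      = ∑ j ∈ Finset.range (k+1), (φ j).eval x * a j := by
    rw [Finset.sum_congr rfl (fun j _ => by rw [hphi j])]
    rw [← Finset.sum_subset (Finset.range_subset_range.mpr (by omega : k+1 ≤ n+1))]
    · apply Finset.sum_congr rfl
      intro j hj
      rw [if_pos hj]
    · intro j _ hj
      rw [if_neg hj, mul_zero]
  rw [hsum]
  have := congrArg (Polynomial.eval x) ha
  rw [eval_pow, eval_X, eval_finset_sum] at this
  rw [this]
  apply Finset.sum_congr rfl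
  intro j _
  rw [eval_mul, eval_C]
  ring

include hμT hdeg hlead horth in
lemma repro_mono' (x : ℂ) (k : ℕ) (hk : k ≤ n) :
    pInn μ (Kp φ n x) (X^k) = (conj x)^k := by
  rw [pInn_conj μ hμT, repro_mono μ hμT φ hdeg hlead horth n x k hk, map_pow]

include hμT hdeg hlead horth in
lemma innF (x : ℂ) (hx : x ∈ Metric.sphere (0:ℂ) 1) (k : ℕ) (hk1 : 1 ≤ k) (hkn : k ≤ n) :
    pInn μ ((X - C x) * Kp φ n x) (X^k) = 0 := by
  rw [mem_sphere_zero_iff_norm] at hx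
  have hxx : conj x * x = 1 := by rw [Complex.conj_mul', hx]; norm_num
  obtain ⟨m, rfl⟩ : ∃ m, k = m + 1 := ⟨k - 1, by omega⟩
  have hexp : (X - C x) * Kp φ n x = X * Kp φ n x - C x * Kp φ n x := by ring
  rw [hexp, pInn_sub_left μ hμT, pInn_C_mul_left μ hμT]
  have h1 : pInn μ (X * Kp φ n x) (X^(m+1)) = (conj x)^m := by
    rw [pow_succ' X m, pInn_shift μ hμT]
    exact repro_mono' μ hμT φ hdeg hlead horth n x m (by omega)
  rw [h1, repro_mono' μ hμT φ hdeg hlead horth n x (m+1) hkn]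
  rw [pow_succ]
  calc (conj x)^m - x * ((conj x)^m * conj x) = (conj x)^m * (1 - conj x * x) := by ring
    _ = 0 := by rw [hxx]; ring

end repro

section zero
variable (μ : Measure ℂ) [IsFiniteMeasure μ]
    (hμT : μ (Metric.sphere (0 : ℂ) 1)ᶜ = 0)
    (hμinf : ∀ s : Finset ℂ, μ ((s : Set ℂ)ᶜ) ≠ 0)
set_option linter.unusedSectionVars false

include hμT hμinf in
lemma eq_zero_of_pInn_self (p : Polynomial ℂ) (hpp : pInn μ p p = 0) : p = 0 := by
  by_contra hp
  have hint : Integrable (fun z => p.eval z * conj (p.eval z)) μ := int_poly μ hμT p p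
  have hreal : (∫ z, Complex.normSq (p.eval z) ∂μ) = 0 := by
    have h1 : (∫ z, Complex.normSq (p.eval z) ∂μ) = (pInn μ p p).re := by
      unfold pInn
      have h2 : (∫ z, eval z p * (starRingEnd ℂ) (eval z p) ∂μ).re
          = ∫ z, (eval z p * (starRingEnd ℂ) (eval z p)).re ∂μ := (integral_re hint).symm
      rw [h2]
      congr 1; funext z
      rw [Complex.mul_conj]
      simp
    rw [h1, hpp, Complex.zero_re]
  have hintre : Integrable (fun z => Complex.normSq (p.eval z)) μ := by
    have := hint.re
    convert this using 1
    funext z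
    rw [Complex.mul_conj]
    simp
  have hae : (fun z => Complex.normSq (p.eval z)) =ᵐ[μ] 0 := by
    rw [← MeasureTheory.integral_eq_zero_iff_of_nonneg ?_ hintre]
    · exact hreal
    · intro z
      exact Complex.normSq_nonneg _
  have hnull : μ {z | Complex.normSq (p.eval z) ≠ 0} = 0 := by
    have := hae
    rw [Filter.EventuallyEq, ae_iff] at this
    simpa using this
  refine hμinf p.roots.toFinset ?_
  refine measure_mono_null ?_ hnull
  intro z hz
  simp only [Set.mem_compl_iff, Finset.mem_coe] at hz
  have : p.eval z ≠ 0 := by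
    intro h
    exact hz (by rw [Multiset.mem_toFinset, mem_roots hp]; exact h)
  simpa [Complex.normSq_eq_zero] using this

include hμT hμinf in
lemma eq_zero_of_pInn_pow (n : ℕ) (p : Polynomial ℂ)
    (hdp : p.degree ≤ ((n+1 : ℕ) : WithBot ℕ))
    (h : ∀ k ≤ n+1, pInn μ p (X^k) = 0) : p = 0 := by
  apply eq_zero_of_pInn_self μ hμT hμinf
  have hnd : p.natDegree < n + 2 := by
    have := Polynomial.natDegree_le_iff_degree_le.mpr hdp
    omega
  have hrep : p = ∑ i ∈ Finset.range (n+2), C (p.coeff i) * X^i := by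
    conv_lhs => rw [Polynomial.as_sum_range' p (n+2) hnd]
    simp [Polynomial.C_mul_X_pow_eq_monomial]
  have : pInn μ p p = ∑ i ∈ Finset.range (n+2), conj (p.coeff i) * pInn μ p (X^i) := by
    conv_lhs => rw [pInn_conj μ hμT]
    conv_lhs => rw [show pInn μ p p = pInn μ (∑ i ∈ Finset.range (n+2), C (p.coeff i) * X^i) p from by rw [← hrep]]
    rw [pInn_sum_left μ hμT, map_sum]
    apply Finset.sum_congr rfl
    intro i _
    rw [pInn_C_mul_left μ hμT, map_mul, ← pInn_conj μ hμT]
  rw [this]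
  apply Finset.sum_eq_zero
  intro i hi
  rw [Finset.mem_range] at hi
  rw [h i (by omega), mul_zero]

end zero

noncomputable def circpt (m : ℕ) : ℂ := Complex.exp ((((m:ℝ)+1)⁻¹ : ℝ) * Complex.I)

lemma circpt_sphere (m : ℕ) : circpt m ∈ Metric.sphere (0:ℂ) 1 := by
  rw [mem_sphere_zero_iff_norm, circpt]
  exact_mod_cast Complex.norm_exp_ofReal_mul_I _

lemma circpt_inj : Function.Injective circpt := by
  intro a b hab
  unfold circpt at hab
  rw [Complex.exp_eq_exp_iff_exists_int] at hab
  obtain ⟨k, hk⟩ := hab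
  have him : ((a:ℝ)+1)⁻¹ = ((b:ℝ)+1)⁻¹ + (k:ℝ) * (2*Real.pi) := by
    have h2 : ((((a:ℝ)+1)⁻¹ : ℝ) : ℂ) * Complex.I
        = ((((b:ℝ)+1)⁻¹ + (k:ℝ)*(2*Real.pi) : ℝ) : ℂ) * Complex.I := by
      rw [hk]; push_cast; ring
    have h3 := mul_right_cancel₀ Complex.I_ne_zero h2
    exact_mod_cast h3
  have ha0 : (0:ℝ) < (a:ℝ)+1 := by positivity
  have hb0 : (0:ℝ) < (b:ℝ)+1 := by positivity
  have ha1 : ((a:ℝ)+1)⁻¹ ≤ 1 := by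
    rw [inv_le_one_iff₀]; right; linarith [Nat.cast_nonneg (α := ℝ) a]
  have hb1 : ((b:ℝ)+1)⁻¹ ≤ 1 := by
    rw [inv_le_one_iff₀]; right; linarith [Nat.cast_nonneg (α := ℝ) b]
  have ha2 : (0:ℝ) < ((a:ℝ)+1)⁻¹ := by positivity
  have hb2 : (0:ℝ) < ((b:ℝ)+1)⁻¹ := by positivity
  have hπ := Real.pi_gt_three
  have hk0 : k = 0 := by
    by_contra hk0
    have h1 : (1:ℝ) ≤ |(k:ℝ)| := by
      have : k ≠ 0 := hk0
      exact_mod_cast Int.one_le_abs (by exact_mod_cast this)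
    have habs : |((a:ℝ)+1)⁻¹ - ((b:ℝ)+1)⁻¹| < 1 := by
      rw [abs_lt]; constructor <;> linarith
    have : ((a:ℝ)+1)⁻¹ - ((b:ℝ)+1)⁻¹ = k * (2*Real.pi) := by linarith
    rw [this, abs_mul, abs_of_pos (by linarith : (0:ℝ) < 2*Real.pi)] at habs
    nlinarith [abs_nonneg ((k:ℝ))]
  rw [hk0] at him
  simp only [Int.cast_zero, zero_mul, add_zero] at him
  have : (a:ℝ)+1 = (b:ℝ)+1 := inv_injective him
  exact_mod_cast add_right_cancel this

lemma exists_circpt_notin (s : Finset ℂ) : ∃ m, circpt m ∉ s := by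
  by_contra h
  push_neg at h
  have hsub : Set.range circpt ⊆ ↑s := by rintro _ ⟨m, rfl⟩; exact h m
  exact (Set.infinite_range_of_injective circpt_inj) (s.finite_toSet.subset hsub)

lemma degCmul_le (c : ℂ) (p : Polynomial ℂ) : (C c * p).degree ≤ p.degree := by
  refine le_trans (Polynomial.degree_mul_le _ _) ?_
  calc (C c).degree + p.degree ≤ 0 + p.degree := add_le_add degree_C_le (le_refl _)
    _ = p.degree := zero_add _

lemma degF_le (φ : ℕ → Polynomial ℂ) (hdeg : ∀ k, (φ k).degree = (k : ℕ)) (n : ℕ) (x : ℂ) :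
    ((X - C x) * Kp φ n x).degree ≤ ((n+1 : ℕ) : WithBot ℕ) := by
  refine le_trans (Polynomial.degree_mul_le _ _) ?_
  have h1 : (X - C x).degree = 1 := Polynomial.degree_X_sub_C x
  rw [h1]
  calc (1 : WithBot ℕ) + (Kp φ n x).degree ≤ 1 + (n : ℕ) :=
        add_le_add (le_refl _) (degKp φ hdeg n x)
    _ = ((n+1 : ℕ) : WithBot ℕ) := by
        push_cast; rw [add_comm]

lemma evalF (φ : ℕ → Polynomial ℂ) (n : ℕ) (x y : ℂ) :
    ((X - C x) * Kp φ n x).eval y = (y - x) * christoffelK φ n x y := by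
  rw [eval_mul, eval_sub, eval_X, eval_C, Kp_eval]

lemma Kself_ne (φ : ℕ → Polynomial ℂ)
    (hdeg : ∀ k, (φ k).degree = (k : ℕ))
    (hlead : ∀ k, 0 < ((φ k).leadingCoeff).re ∧ ((φ k).leadingCoeff).im = 0)
    (n : ℕ) (w : ℂ) : christoffelK φ n w w ≠ 0 := by
  have hcast : christoffelK φ n w w
      = ((∑ j ∈ Finset.range (n+1), ‖(φ j).eval w‖^2 : ℝ) : ℂ) := by
    unfold christoffelK
    push_cast
    apply Finset.sum_congr rfl
    intro j _
    rw [Complex.conj_mul']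
  have he0 : (φ 0).eval w ≠ 0 := by
    have hd : (φ 0).natDegree = 0 := natDegree_eq_of_degree_eq_some (hdeg 0)
    have h0 : φ 0 = C ((φ 0).leadingCoeff) := by
      conv_lhs => rw [Polynomial.eq_C_of_natDegree_le_zero (le_of_eq hd)]
      rw [Polynomial.leadingCoeff, hd]
    rw [h0, eval_C]
    exact lead_ne φ hlead 0
  have hpos : (0:ℝ) < ∑ j ∈ Finset.range (n+1), ‖(φ j).eval w‖^2 := by
    have h1 : (0:ℝ) < ‖(φ 0).eval w‖^2 := by
      have := norm_pos_iff.mpr he0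
      positivity
    refine lt_of_lt_of_le h1 ?_
    refine Finset.single_le_sum (f := fun j => ‖(φ j).eval w‖^2) ?_ ?_
    · intro i _; positivity
    · simp
  rw [hcast]
  exact_mod_cast ne_of_gt hpos

lemma on_sphere_factor_ne (u v : ℂ) (hu : u ∈ Metric.sphere (0:ℂ) 1) (huv : v ≠ u) :
    1 - conj u * v ≠ 0 := by
  rw [mem_sphere_zero_iff_norm] at hu
  have huu : conj u * u = 1 := by rw [Complex.conj_mul', hu]; norm_num
  intro h
  have h1 : conj u * v = 1 := by linear_combination -h
  have hcu : conj u ≠ 0 := by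
    intro h0
    rw [h0, zero_mul] at huu
    exact zero_ne_one huu
  exact huv (mul_left_cancel₀ hcu (h1.trans huu.symm))

/-- If `ζ` and `ξ` are two distinct points of the unit circle that are both zeros of the
para-orthogonal polynomial `B_{n+1}(w,·)`, then `K_n(ζ, ξ) = 0`. -/
theorem christoffelK_eq_zero_of_distinct_paraOrtho_zeros
    (μ : Measure ℂ) [IsFiniteMeasure μ]
    (hμT : μ (Metric.sphere (0 : ℂ) 1)ᶜ = 0)
    (hμinf : ∀ s : Finset ℂ, μ ((s : Set ℂ)ᶜ) ≠ 0)
    (φ : ℕ → Polynomial ℂ)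
    (hdeg : ∀ k, (φ k).degree = (k : ℕ))
    (hlead : ∀ k, 0 < ((φ k).leadingCoeff).re ∧ ((φ k).leadingCoeff).im = 0)
    (horth : ∀ k m, ∫ z, (φ k).eval z * conj ((φ m).eval z) ∂μ
        = if k = m then 1 else 0)
    (n : ℕ) (w : ℂ) (hw : w ∈ Metric.sphere (0 : ℂ) 1)
    (ζ ξ : ℂ) (hζ : ζ ∈ Metric.sphere (0 : ℂ) 1) (hξ : ξ ∈ Metric.sphere (0 : ℂ) 1)
    (hne : ζ ≠ ξ)
    (hζ0 : paraOrtho φ n w ζ = 0) (hξ0 : paraOrtho φ n w ξ = 0) :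
    christoffelK φ n ζ ξ = 0 := by
  classical
  unfold paraOrtho at hζ0 hξ0
  by_cases hζw : ζ = w
  · -- ζ = w; then ξ ≠ w and K(w,ξ) = 0
    subst hζw
    have hξw : ξ ≠ ζ := fun h => hne h.symm
    have := mul_eq_zero.mp hξ0
    rcases this with h | h
    · exact absurd h (on_sphere_factor_ne ζ ξ hζ hξw)
    · exact h
  by_cases hξw : ξ = w
  · subst hξw
    rcases mul_eq_zero.mp hζ0 with h | h
    · exact absurd h (on_sphere_factor_ne ξ ζ hξ hζw)
    · rw [Ksymm, h, map_zero]
  -- main case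
  have hKwζ : christoffelK φ n w ζ = 0 := by
    rcases mul_eq_zero.mp hζ0 with h | h
    · exact absurd h (on_sphere_factor_ne w ζ hw hζw)
    · exact h
  have hKwξ : christoffelK φ n w ξ = 0 := by
    rcases mul_eq_zero.mp hξ0 with h | h
    · exact absurd h (on_sphere_factor_ne w ξ hw hξw)
    · exact h
  set Fζ : Polynomial ℂ := (X - C ζ) * Kp φ n ζ with hFζdef
  set Fξ : Polynomial ℂ := (X - C ξ) * Kp φ n ξ with hFξdef
  -- choose auxiliary point x
  have hKpw_ne : Kp φ n w ≠ 0 := by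
    intro h
    refine Kself_ne φ hdeg hlead n w ?_
    rw [← Kp_eval, h, eval_zero]
  obtain ⟨m, hm⟩ := exists_circpt_notin ((Kp φ n w).roots.toFinset ∪ {w})
  set x := circpt m with hxdef
  have hx : x ∈ Metric.sphere (0:ℂ) 1 := circpt_sphere m
  have hxw : x ≠ w := by
    intro h
    exact hm (Finset.mem_union_right _ (by simp [h]))
  have hxK : (Kp φ n w).eval x ≠ 0 := by
    intro h
    refine hm (Finset.mem_union_left _ ?_)
    rw [Multiset.mem_toFinset, mem_roots hKpw_ne]
    exact h
  set Fx : Polynomial ℂ := (X - C x) * Kp φ n x with hFxdef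
  -- evaluations at w
  have hFζw : Fζ.eval w = 0 := by
    rw [hFζdef, evalF, Ksymm, hKwζ, map_zero, mul_zero]
  have hFξw : Fξ.eval w = 0 := by
    rw [hFξdef, evalF, Ksymm, hKwξ, map_zero, mul_zero]
  have hFxw : Fx.eval w ≠ 0 := by
    rw [hFxdef, evalF]
    refine mul_ne_zero (sub_ne_zero.mpr (fun h => hxw h.symm)) ?_
    rw [Ksymm, ← Kp_eval]
    simpa using hxK
  -- inner products
  set a1 := pInn μ Fζ (X^0) with ha1def
  set a2 := pInn μ Fζ (X^(n+1)) with ha2def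
  set b1 := pInn μ Fξ (X^0) with hb1def
  set b2 := pInn μ Fξ (X^(n+1)) with hb2def
  set e1 := pInn μ Fx (X^0) with he1def
  set e2 := pInn μ Fx (X^(n+1)) with he2def
  have hmidζ : ∀ k, 1 ≤ k → k ≤ n → pInn μ Fζ (X^k) = 0 :=
    fun k h1 h2 => innF μ hμT φ hdeg hlead horth n ζ hζ k h1 h2
  have hmidξ : ∀ k, 1 ≤ k → k ≤ n → pInn μ Fξ (X^k) = 0 :=
    fun k h1 h2 => innF μ hμT φ hdeg hlead horth n ξ hξ k h1 h2
  have hmidx : ∀ k, 1 ≤ k → k ≤ n → pInn μ Fx (X^k) = 0 :=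
    fun k h1 h2 => innF μ hμT φ hdeg hlead horth n x hx k h1 h2
  -- determinant vanishes
  have hdet : a1 * b2 - a2 * b1 = 0 := by
    by_contra hd
    set α := (e1*b2 - e2*b1)/(a1*b2 - a2*b1) with hα
    set β := (a1*e2 - a2*e1)/(a1*b2 - a2*b1) with hβ
    set G : Polynomial ℂ := Fx - C α * Fζ - C β * Fξ with hGdef
    have hGinn : ∀ k, pInn μ G (X^k)
        = pInn μ Fx (X^k) - α * pInn μ Fζ (X^k) - β * pInn μ Fξ (X^k) := by
      intro k
      rw [hGdef, pInn_sub_left μ hμT, pInn_sub_left μ hμT,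
        pInn_C_mul_left μ hμT, pInn_C_mul_left μ hμT]
    have hGz : ∀ k ≤ n+1, pInn μ G (X^k) = 0 := by
      intro k hk
      rw [hGinn k]
      rcases Nat.eq_zero_or_pos k with h0 | h1
      · subst h0
        rw [← ha1def, ← hb1def, ← he1def, hα, hβ]
        rw [div_mul_eq_mul_div, div_mul_eq_mul_div, sub_sub, ← add_div, sub_eq_zero, eq_div_iff hd]
        ring
      rcases eq_or_lt_of_le hk with hk1 | hk1
      · subst hk1
        rw [← ha2def, ← hb2def, ← he2def, hα, hβ]
        rw [div_mul_eq_mul_div, div_mul_eq_mul_div, sub_sub, ← add_div, sub_eq_zero, eq_div_iff hd]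
        ring
      · have hkn : k ≤ n := by omega
        rw [hmidζ k h1 hkn, hmidξ k h1 hkn, hmidx k h1 hkn]
        ring
    have hGdeg : G.degree ≤ ((n+1:ℕ) : WithBot ℕ) := by
      rw [hGdef]
      refine le_trans (degree_sub_le _ _) (max_le ?_ ?_)
      · refine le_trans (degree_sub_le _ _) (max_le ?_ ?_)
        · exact degF_le φ hdeg n x
        · exact le_trans (degCmul_le _ _) (degF_le φ hdeg n ζ)
      · exact le_trans (degCmul_le _ _) (degF_le φ hdeg n ξ)
    have hG0 : G = 0 := eq_zero_of_pInn_pow μ hμT hμinf n G hGdeg hGz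
    have hevalw := congrArg (Polynomial.eval w) hG0
    rw [hGdef] at hevalw
    simp only [eval_sub, eval_mul, eval_C, eval_zero] at hevalw
    rw [hFζw, hFξw] at hevalw
    simp at hevalw
    exact hFxw hevalw
  -- now derive the conclusion
  by_cases ha1 : a1 ≠ 0
  · -- P := C b1 * Fζ - C a1 * Fξ = 0
    set P : Polynomial ℂ := C b1 * Fζ - C a1 * Fξ with hPdef
    have hPz : ∀ k ≤ n+1, pInn μ P (X^k) = 0 := by
      intro k hk
      rw [hPdef, pInn_sub_left μ hμT, pInn_C_mul_left μ hμT, pInn_C_mul_left μ hμT]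
      rcases Nat.eq_zero_or_pos k with h0 | h1
      · subst h0; rw [← ha1def, ← hb1def]; ring
      rcases eq_or_lt_of_le hk with hk1 | hk1
      · subst hk1
        rw [← ha2def, ← hb2def]
        linear_combination -hdet
      · have hkn : k ≤ n := by omega
        rw [hmidζ k h1 hkn, hmidξ k h1 hkn]; ring
    have hPdeg : P.degree ≤ ((n+1:ℕ) : WithBot ℕ) := by
      rw [hPdef]
      refine le_trans (degree_sub_le _ _) (max_le ?_ ?_)
      · exact le_trans (degCmul_le _ _) (degF_le φ hdeg n ζ)
      · exact le_trans (degCmul_le _ _) (degF_le φ hdeg n ξ)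
    have hP0 : P = 0 := eq_zero_of_pInn_pow μ hμT hμinf n P hPdeg hPz
    by_cases hb1' : b1 = 0
    · -- Fξ = 0
      have : C a1 * Fξ = 0 := by
        have := hP0
        rw [hPdef, hb1', map_zero, zero_mul, zero_sub, neg_eq_zero] at this
        exact this
      have hFξ0 : Fξ = 0 := by
        rcases mul_eq_zero.mp this with h | h
        · exact absurd (C_eq_zero.mp h) ha1
        · exact h
      have hKpξ : Kp φ n ξ = 0 := by
        rcases mul_eq_zero.mp (hFξdef ▸ hFξ0) with h | h
        · exact absurd h (X_sub_C_ne_zero ξ)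
        · exact h
      rw [Ksymm, ← Kp_eval, hKpξ, eval_zero, map_zero]
    · -- b1 ≠ 0
      have hevalξ := congrArg (Polynomial.eval ξ) hP0
      rw [hPdef] at hevalξ
      simp only [eval_sub, eval_mul, eval_C, eval_zero] at hevalξ
      rw [hFζdef, hFξdef] at hevalξ
      rw [evalF, evalF] at hevalξ
      have h2 : b1 * ((ξ - ζ) * christoffelK φ n ζ ξ) = 0 := by
        rw [sub_self, zero_mul, mul_zero, sub_zero] at hevalξ
        exact hevalξ
      have h3 := (mul_eq_zero.mp h2).resolve_left hb1'
      exact (mul_eq_zero.mp h3).resolve_left (sub_ne_zero.mpr (fun h => hne h.symm))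
  · push_neg at ha1
    by_cases ha2 : a2 ≠ 0
    · set P : Polynomial ℂ := C b2 * Fζ - C a2 * Fξ with hPdef
      have hPz : ∀ k ≤ n+1, pInn μ P (X^k) = 0 := by
        intro k hk
        rw [hPdef, pInn_sub_left μ hμT, pInn_C_mul_left μ hμT, pInn_C_mul_left μ hμT]
        rcases Nat.eq_zero_or_pos k with h0 | h1
        · subst h0
          rw [← ha1def, ← hb1def]
          rw [ha1] at hdet ⊢
          linear_combination hdet
        rcases eq_or_lt_of_le hk with hk1 | hk1
        · subst hk1; rw [← ha2def, ← hb2def]; ring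
        · have hkn : k ≤ n := by omega
          rw [hmidζ k h1 hkn, hmidξ k h1 hkn]; ring
      have hPdeg : P.degree ≤ ((n+1:ℕ) : WithBot ℕ) := by
        rw [hPdef]
        refine le_trans (degree_sub_le _ _) (max_le ?_ ?_)
        · exact le_trans (degCmul_le _ _) (degF_le φ hdeg n ζ)
        · exact le_trans (degCmul_le _ _) (degF_le φ hdeg n ξ)
      have hP0 : P = 0 := eq_zero_of_pInn_pow μ hμT hμinf n P hPdeg hPz
      by_cases hb2' : b2 = 0
      · have : C a2 * Fξ = 0 := by
          have := hP0
          rw [hPdef, hb2', map_zero, zero_mul, zero_sub, neg_eq_zero] at this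
          exact this
        have hFξ0 : Fξ = 0 := by
          rcases mul_eq_zero.mp this with h | h
          · exact absurd (C_eq_zero.mp h) ha2
          · exact h
        have hKpξ : Kp φ n ξ = 0 := by
          rcases mul_eq_zero.mp (hFξdef ▸ hFξ0) with h | h
          · exact absurd h (X_sub_C_ne_zero ξ)
          · exact h
        rw [Ksymm, ← Kp_eval, hKpξ, eval_zero, map_zero]
      · have hevalξ := congrArg (Polynomial.eval ξ) hP0
        rw [hPdef] at hevalξ
        simp only [eval_sub, eval_mul, eval_C, eval_zero] at hevalξ
        rw [hFζdef, hFξdef] at hevalξ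
        rw [evalF, evalF] at hevalξ
        have h2 : b2 * ((ξ - ζ) * christoffelK φ n ζ ξ) = 0 := by
          rw [sub_self, zero_mul, mul_zero, sub_zero] at hevalξ
          exact hevalξ
        have h3 := (mul_eq_zero.mp h2).resolve_left hb2'
        exact (mul_eq_zero.mp h3).resolve_left (sub_ne_zero.mpr (fun h => hne h.symm))
    · push_neg at ha2
      -- Fζ = 0
      have hFζz : ∀ k ≤ n+1, pInn μ Fζ (X^k) = 0 := by
        intro k hk
        rcases Nat.eq_zero_or_pos k with h0 | h1
        · subst h0; rw [← ha1def]; exact ha1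
        rcases eq_or_lt_of_le hk with hk1 | hk1
        · subst hk1; rw [← ha2def]; exact ha2
        · exact hmidζ k h1 (by omega)
      have hFζ0 : Fζ = 0 :=
        eq_zero_of_pInn_pow μ hμT hμinf n Fζ (degF_le φ hdeg n ζ) hFζz
      have hKpζ : Kp φ n ζ = 0 := by
        rcases mul_eq_zero.mp (hFζdef ▸ hFζ0) with h | h
        · exact absurd h (X_sub_C_ne_zero ζ)
        · exact h
      rw [← Kp_eval, hKpζ, eval_zero]
end

section
/- Let μ be a finite positive Borel measure on the unit circle T with infinite support, K_n its Christoffel kernel, and for w ∈ T let B_{n+1}(w,z) := (1 − conj(w) z) K_n(w,z). If ζ and ξ are zeros of B_{n+1}(w,·) lying on T, then the zero sets of the two polynomials B_{n+1}(ζ,·) and B_{n+1}(ξ,·) coincide. -/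
open MeasureTheory Polynomial Filter
open scoped ComplexConjugate Topology

noncomputable def KPoly (φ : ℕ → Polynomial ℂ) (n : ℕ) (w : ℂ) : Polynomial ℂ :=
  ∑ j ∈ Finset.range (n + 1), Polynomial.C (conj ((φ j).eval w)) * φ j

noncomputable def BPoly (φ : ℕ → Polynomial ℂ) (n : ℕ) (w : ℂ) : Polynomial ℂ :=
  (1 - Polynomial.C (conj w) * Polynomial.X) * KPoly φ n w

lemma KPoly_eval (φ : ℕ → Polynomial ℂ) (n : ℕ) (w z : ℂ) :
    (KPoly φ n w).eval z = christoffelK φ n w z := by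
  simp [KPoly, christoffelK, Polynomial.eval_finset_sum]

lemma BPoly_eval (φ : ℕ → Polynomial ℂ) (n : ℕ) (w z : ℂ) :
    (BPoly φ n w).eval z = paraOrtho φ n w z := by
  simp [BPoly, paraOrtho, KPoly_eval]

lemma degC_mul_le (a : ℂ) (p : Polynomial ℂ) : (Polynomial.C a * p).degree ≤ p.degree :=
  le_trans (Polynomial.degree_mul_le _ _)
    (by simpa using add_le_add_left (Polynomial.degree_C_le (a := a)) p.degree)


lemma span_lemma (φ : ℕ → Polynomial ℂ) (hdeg : ∀ k, (φ k).degree = (k:ℕ))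
    (hlead : ∀ k, (φ k).leadingCoeff ≠ 0) :
    ∀ n (q : Polynomial ℂ), q.degree ≤ (n:ℕ) →
    ∃ c : ℕ → ℂ, q = ∑ j ∈ Finset.range (n+1), Polynomial.C (c j) * φ j := by
  intro n
  induction n with
  | zero =>
    intro q hq
    have hnd0 : (φ 0).natDegree = 0 := Polynomial.natDegree_eq_of_degree_eq_some (hdeg 0)
    have h0 : φ 0 = Polynomial.C ((φ 0).leadingCoeff) := by
      conv_lhs => rw [Polynomial.eq_C_of_natDegree_eq_zero hnd0]
      rw [Polynomial.leadingCoeff, hnd0]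
    have hqC : q = Polynomial.C (q.coeff 0) :=
      Polynomial.eq_C_of_degree_le_zero (by simpa using hq)
    refine ⟨fun _ => q.coeff 0 / (φ 0).leadingCoeff, ?_⟩
    rw [Finset.sum_range_one, h0, ← Polynomial.C_mul]
    simp only [Polynomial.leadingCoeff_C]
    rw [div_mul_cancel₀ _ (hlead 0)]
    exact hqC
  | succ n ih =>
    intro q hq
    set b := (φ (n+1)).leadingCoeff with hb
    have hnd : (φ (n+1)).natDegree = n+1 := Polynomial.natDegree_eq_of_degree_eq_some (hdeg (n+1))
    have hcb : (φ (n+1)).coeff (n+1) = b := by rw [hb, Polynomial.leadingCoeff, hnd]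
    set a := q.coeff (n+1) with ha
    set q' := q - Polynomial.C (a/b) * φ (n+1) with hq'
    have hdq' : q'.degree ≤ (n:ℕ) := by
      rw [Polynomial.degree_le_iff_coeff_zero]
      intro m hm
      have hm' : n + 1 ≤ m := by exact_mod_cast hm
      rcases eq_or_lt_of_le hm' with h | h
      · rw [hq', Polynomial.coeff_sub, Polynomial.coeff_C_mul, ← h, hcb, ← ha,
          div_mul_cancel₀ _ (hlead (n+1)), sub_self]
      · have h1 : q.coeff m = 0 :=
          Polynomial.coeff_eq_zero_of_degree_lt (lt_of_le_of_lt hq (by exact_mod_cast h))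
        have h2 : (φ (n+1)).coeff m = 0 :=
          Polynomial.coeff_eq_zero_of_degree_lt (by rw [hdeg (n+1)]; exact_mod_cast h)
        rw [hq', Polynomial.coeff_sub, Polynomial.coeff_C_mul, h1, h2, mul_zero, sub_self]
    obtain ⟨c, hc⟩ := ih q' hdq'
    refine ⟨fun j => if j = n+1 then a/b else c j, ?_⟩
    rw [Finset.sum_range_succ]
    have : ∑ j ∈ Finset.range (n+1), Polynomial.C (if j = n+1 then a/b else c j) * φ j
        = ∑ j ∈ Finset.range (n+1), Polynomial.C (c j) * φ j := by
      apply Finset.sum_congr rfl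
      intro j hj
      rw [if_neg (by have := Finset.mem_range.mp hj; omega)]
    simp only
    rw [if_pos trivial, this, ← hc, hq', sub_add_cancel]

noncomputable def ip (μ : Measure ℂ) (p q : Polynomial ℂ) : ℂ :=
  ∫ z, p.eval z * conj (q.eval z) ∂μ

section
set_option linter.unusedSectionVars false
variable (μ : Measure ℂ) [IsFiniteMeasure μ]

lemma ae_circle (hμT : μ (Metric.sphere (0 : ℂ) 1)ᶜ = 0) :
    ∀ᵐ z ∂μ, z * conj z = 1 := by
  have hae : ∀ᵐ z ∂μ, z ∈ Metric.sphere (0:ℂ) 1 := by rw [ae_iff]; exact hμT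
  refine hae.mono fun z hz => ?_
  rw [mem_sphere_zero_iff_norm] at hz
  rw [Complex.mul_conj]
  norm_cast
  simp [Complex.normSq_eq_norm_sq, hz]

lemma integ_cont {E : Type*} [NormedAddCommGroup E]
    (hμT : μ (Metric.sphere (0 : ℂ) 1)ᶜ = 0) (f : ℂ → E) (hf : Continuous f) :
    Integrable f μ := by
  obtain ⟨C, hC⟩ := (isCompact_sphere (0:ℂ) 1).exists_bound_of_continuousOn hf.continuousOn
  have hae : ∀ᵐ z ∂μ, z ∈ Metric.sphere (0:ℂ) 1 := by rw [ae_iff]; exact hμT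
  exact ⟨hf.aestronglyMeasurable, HasFiniteIntegral.of_bounded (C := C)
    (hae.mono fun z hz => hC z hz)⟩

lemma integ (hμT : μ (Metric.sphere (0 : ℂ) 1)ᶜ = 0) (p q : Polynomial ℂ) :
    Integrable (fun z => p.eval z * conj (q.eval z)) μ :=
  integ_cont μ hμT _ ((p.continuous_aeval).mul (Complex.continuous_conj.comp q.continuous_aeval))

lemma ip_phi (hμT : μ (Metric.sphere (0 : ℂ) 1)ᶜ = 0) (φ : ℕ → Polynomial ℂ)
    (horth : ∀ k m, ∫ z, (φ k).eval z * conj ((φ m).eval z) ∂μ = if k = m then 1 else 0)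
    (n j : ℕ) (hj : j ∈ Finset.range (n+1)) (c : ℕ → ℂ) :
    ip μ (φ j) (∑ m ∈ Finset.range (n+1), Polynomial.C (c m) * φ m) = conj (c j) := by
  rw [ip]
  have h1 : ∀ z, (φ j).eval z * conj ((∑ m ∈ Finset.range (n+1), Polynomial.C (c m) * φ m).eval z)
      = ∑ m ∈ Finset.range (n+1), conj (c m) * ((φ j).eval z * conj ((φ m).eval z)) := by
    intro z
    rw [Polynomial.eval_finset_sum, map_sum, Finset.mul_sum]
    refine Finset.sum_congr rfl fun m hm => ?_
    simp only [Polynomial.eval_mul, Polynomial.eval_C, map_mul]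
    ring
  simp_rw [h1]
  rw [integral_finset_sum _ (fun m _ => ((integ μ hμT (φ j) (φ m)).const_mul _))]
  simp_rw [MeasureTheory.integral_const_mul, horth, mul_ite, mul_one, mul_zero]
  rw [Finset.sum_ite_eq (Finset.range (n+1)) j (fun m => conj (c m)), if_pos hj]

lemma repro (hμT : μ (Metric.sphere (0 : ℂ) 1)ᶜ = 0) (φ : ℕ → Polynomial ℂ)
    (horth : ∀ k m, ∫ z, (φ k).eval z * conj ((φ m).eval z) ∂μ = if k = m then 1 else 0)
    (n : ℕ) (w : ℂ) (q : Polynomial ℂ) (c : ℕ → ℂ)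
    (hq : q = ∑ j ∈ Finset.range (n+1), Polynomial.C (c j) * φ j) :
    ip μ (KPoly φ n w) q = conj (q.eval w) := by
  have h1 : ∀ z, (KPoly φ n w).eval z * conj (q.eval z)
      = ∑ j ∈ Finset.range (n+1), conj ((φ j).eval w) * ((φ j).eval z * conj (q.eval z)) := by
    intro z
    rw [KPoly, Polynomial.eval_finset_sum, Finset.sum_mul]
    refine Finset.sum_congr rfl fun j hj => ?_
    simp only [Polynomial.eval_mul, Polynomial.eval_C]
    ring
  rw [ip]
  simp_rw [h1]
  rw [integral_finset_sum _ (fun j _ => ((integ μ hμT (φ j) q).const_mul _))]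
  have h2 : ∀ j ∈ Finset.range (n+1),
      (∫ z, conj ((φ j).eval w) * ((φ j).eval z * conj (q.eval z)) ∂μ)
      = conj ((φ j).eval w) * conj (c j) := by
    intro j hj
    rw [MeasureTheory.integral_const_mul]
    have := ip_phi μ hμT φ horth n j hj c
    rw [ip] at this
    rw [← hq] at this
    rw [this]
  rw [Finset.sum_congr rfl h2, hq]
  rw [Polynomial.eval_finset_sum, map_sum]
  refine Finset.sum_congr rfl fun j hj => ?_
  simp only [Polynomial.eval_mul, Polynomial.eval_C, map_mul]
  ring

lemma ip_def (hμT : μ (Metric.sphere (0 : ℂ) 1)ᶜ = 0)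
    (hμinf : ∀ s : Finset ℂ, μ ((s : Set ℂ)ᶜ) ≠ 0)
    (p : Polynomial ℂ) (hp : ip μ p p = 0) : p = 0 := by
  by_contra hp0
  have h1 : ∀ z, p.eval z * conj (p.eval z) = ((Complex.normSq (p.eval z) : ℝ) : ℂ) := by
    intro z; rw [Complex.mul_conj]
  rw [ip] at hp
  have hint' := integ μ hμT p p
  have h2 : (∫ z, Complex.normSq (p.eval z) ∂μ) = 0 := by
    have hre := integral_re (𝕜 := ℂ) hint'
    rw [hp] at hre
    simp only [RCLike.zero_re] at hre
    rw [← hre]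
    refine integral_congr_ae (Eventually.of_forall fun z => ?_)
    show Complex.normSq (p.eval z) = RCLike.re (p.eval z * conj (p.eval z))
    rw [h1 z]
    simp
  have hint : Integrable (fun z => Complex.normSq (p.eval z)) μ :=
    integ_cont μ hμT _ (Complex.continuous_normSq.comp p.continuous_aeval)
  have h3 := (integral_eq_zero_iff_of_nonneg (fun z => Complex.normSq_nonneg _) hint).mp h2
  have h4 : ∀ᵐ z ∂μ, p.eval z = 0 := by
    refine h3.mono fun z hz => ?_
    have : Complex.normSq (p.eval z) = 0 := hz
    exact Complex.normSq_eq_zero.mp this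
  have h5 : μ {z | ¬ p.eval z = 0} = 0 := h4
  refine hμinf p.roots.toFinset ?_
  refine measure_mono_null ?_ h5
  intro z hz
  simp only [Set.mem_compl_iff, Set.mem_setOf_eq] at hz ⊢
  intro h0
  exact hz (by
    rw [Finset.mem_coe, Multiset.mem_toFinset]
    exact (Polynomial.mem_roots hp0).mpr h0)

lemma christoffelK_symm (φ : ℕ → Polynomial ℂ) (n : ℕ) (w z : ℂ) :
    christoffelK φ n z w = conj (christoffelK φ n w z) := by
  simp only [christoffelK, map_sum, map_mul, Complex.conj_conj]
  exact Finset.sum_congr rfl fun j _ => mul_comm _ _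

lemma Kself_ne_s3 (φ : ℕ → Polynomial ℂ) (hdeg0 : (φ 0).degree = 0)
    (hl : (φ 0).leadingCoeff ≠ 0) (n : ℕ) (u : ℂ) : christoffelK φ n u u ≠ 0 := by
  have h0 : ∀ j, conj ((φ j).eval u) * (φ j).eval u = ((Complex.normSq ((φ j).eval u) : ℝ) : ℂ) := by
    intro j
    rw [mul_comm, Complex.mul_conj]
  have hre : (christoffelK φ n u u).re = ∑ j ∈ Finset.range (n+1), Complex.normSq ((φ j).eval u) := by
    rw [christoffelK, Complex.re_sum]
    refine Finset.sum_congr rfl fun j _ => ?_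
    rw [h0 j, Complex.ofReal_re]
  have hnd0 : (φ 0).natDegree = 0 := Polynomial.natDegree_eq_of_degree_eq_some hdeg0
  have hphi0 : (φ 0).eval u ≠ 0 := by
    conv_lhs => rw [Polynomial.eq_C_of_natDegree_eq_zero hnd0]
    rw [Polynomial.eval_C]
    rwa [Polynomial.leadingCoeff, hnd0] at hl
  have hpos : 0 < (christoffelK φ n u u).re := by
    rw [hre]
    refine Finset.sum_pos' (fun j _ => Complex.normSq_nonneg _) ⟨0, Finset.mem_range.mpr (by omega), ?_⟩
    exact Complex.normSq_pos.mpr hphi0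
  intro h
  rw [h] at hpos
  simp at hpos

lemma KPoly_degree (φ : ℕ → Polynomial ℂ) (hdeg : ∀ k, (φ k).degree = (k:ℕ)) (n : ℕ) (w : ℂ) :
    (KPoly φ n w).degree ≤ (n:ℕ) := by
  refine le_trans (Polynomial.degree_sum_le _ _) ?_
  rw [Finset.sup_le_iff]
  intro j hj
  refine le_trans (degC_mul_le _ _) ?_
  rw [hdeg j]
  exact_mod_cast Nat.lt_succ_iff.mp (Finset.mem_range.mp hj)

lemma BPoly_degree (φ : ℕ → Polynomial ℂ) (hdeg : ∀ k, (φ k).degree = (k:ℕ)) (n : ℕ) (w : ℂ) :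
    (BPoly φ n w).degree ≤ ((n+1 : ℕ) : WithBot ℕ) := by
  refine le_trans (Polynomial.degree_mul_le _ _) ?_
  have h1 : (1 - Polynomial.C (conj w) * Polynomial.X : Polynomial ℂ).degree ≤ 1 := by
    refine le_trans (Polynomial.degree_sub_le _ _) ?_
    rw [max_le_iff]
    constructor
    · exact le_trans Polynomial.degree_one_le (by norm_num)
    · exact Polynomial.degree_C_mul_X_le _
  calc (1 - Polynomial.C (conj w) * Polynomial.X : Polynomial ℂ).degree + (KPoly φ n w).degree
      ≤ 1 + (n:ℕ) := add_le_add h1 (KPoly_degree φ hdeg n w)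
    _ = ((n+1 : ℕ) : WithBot ℕ) := by push_cast; ring

lemma BPoly_ne_zero (φ : ℕ → Polynomial ℂ) (hdeg0 : (φ 0).degree = 0)
    (hl : (φ 0).leadingCoeff ≠ 0) (n : ℕ) (u : ℂ) : BPoly φ n u ≠ 0 := by
  rw [BPoly]
  refine mul_ne_zero ?_ ?_
  · intro h
    have := congrArg (Polynomial.eval 0) h
    simp at this
  · intro h
    have := congrArg (Polynomial.eval u) h
    rw [KPoly_eval] at this
    exact Kself_ne_s3 φ hdeg0 hl n u (by simpa using this)

end

section
set_option linter.unusedSectionVars false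
variable (μ : Measure ℂ) [IsFiniteMeasure μ]
  (hμT : μ (Metric.sphere (0 : ℂ) 1)ᶜ = 0)
  (hμinf : ∀ s : Finset ℂ, μ ((s : Set ℂ)ᶜ) ≠ 0)
  (φ : ℕ → Polynomial ℂ)
  (hdeg : ∀ k, (φ k).degree = (k : ℕ))
  (hlead : ∀ k, (φ k).leadingCoeff ≠ 0)
  (horth : ∀ k m, ∫ z, (φ k).eval z * conj ((φ m).eval z) ∂μ = if k = m then 1 else 0)

include hμT hdeg hlead horth in
lemma repro' (n : ℕ) (w : ℂ) (q : Polynomial ℂ) (hq : q.degree ≤ (n:ℕ)) :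
    ip μ (KPoly φ n w) q = conj (q.eval w) := by
  obtain ⟨c, hc⟩ := span_lemma φ hdeg hlead n q hq
  exact repro μ hμT φ horth n w q c hc

include hμT in
lemma ip_sub_C_mul (a b q : Polynomial ℂ) (c : ℂ) :
    ip μ (a - Polynomial.C c * b) q = ip μ a q - c * ip μ b q := by
  rw [ip, ip, ip]
  have h1 : ∀ z, (a - Polynomial.C c * b).eval z * conj (q.eval z)
      = a.eval z * conj (q.eval z) - c * (b.eval z * conj (q.eval z)) := by
    intro z
    simp only [Polynomial.eval_sub, Polynomial.eval_mul, Polynomial.eval_C]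
    ring
  simp_rw [h1]
  rw [integral_sub (integ μ hμT a q) ((integ μ hμT b q).const_mul c),
    MeasureTheory.integral_const_mul]

include hμT hdeg hlead horth in
lemma BP_perp (n : ℕ) (u : ℂ) (r : Polynomial ℂ)
    (hr : (Polynomial.X * r).degree ≤ ((n:ℕ) : WithBot ℕ)) :
    ip μ (BPoly φ n u) (Polynomial.X * r) = 0 := by
  rcases eq_or_ne r 0 with rfl | hr0
  · rw [ip]
    simp
  have hdr : r.degree ≤ (n:ℕ) := by
    refine le_trans ?_ hr
    rw [mul_comm]
    exact Polynomial.degree_le_mul_left r Polynomial.X_ne_zero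
  have hae := ae_circle μ hμT
  have hcong : ip μ (BPoly φ n u) (Polynomial.X * r)
      = ∫ z, ((KPoly φ n u).eval z * conj ((Polynomial.X * r).eval z)
        - conj u * ((KPoly φ n u).eval z * conj (r.eval z))) ∂μ := by
    rw [ip]
    refine integral_congr_ae (hae.mono fun z hz => ?_)
    simp only [BPoly, Polynomial.eval_mul, Polynomial.eval_sub, Polynomial.eval_one,
      Polynomial.eval_C, Polynomial.eval_X, map_mul]
    linear_combination (-(conj u * (KPoly φ n u).eval z * conj (r.eval z))) * hz
  rw [hcong, integral_sub (integ μ hμT (KPoly φ n u) (Polynomial.X * r))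
      ((integ μ hμT (KPoly φ n u) r).const_mul _), MeasureTheory.integral_const_mul]
  have e1 := repro' μ hμT φ hdeg hlead horth n u (Polynomial.X * r) hr
  have e2 := repro' μ hμT φ hdeg hlead horth n u r hdr
  rw [ip] at e1 e2
  rw [e1, e2]
  simp only [Polynomial.eval_mul, Polynomial.eval_X, map_mul]
  ring


include hμT hμinf hdeg hlead horth in
lemma key (n : ℕ) (w ζ : ℂ) (hw : ‖w‖ = 1) (hζ : ‖ζ‖ = 1)
    (h0 : paraOrtho φ n w ζ = 0) :
    ∃ c : ℂ, c ≠ 0 ∧ BPoly φ n ζ = Polynomial.C c * BPoly φ n w := by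
  have hww : w * conj w = 1 := by
    rw [Complex.mul_conj]; norm_cast
    simp [Complex.normSq_eq_norm_sq, hw]
  have hw0 : w ≠ 0 := by intro h; rw [h] at hw; simp at hw
  by_cases hzw : ζ = w
  · exact ⟨1, one_ne_zero, by rw [hzw, Polynomial.C_1, one_mul]⟩
  have h1 : (1 : ℂ) - conj w * ζ ≠ 0 := by
    intro h
    apply hzw
    have h2 : conj w * ζ = 1 := by linear_combination -h
    calc ζ = (w * conj w) * ζ := by rw [hww, one_mul]
      _ = w * (conj w * ζ) := by ring
      _ = w := by rw [h2, mul_one]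
  have hK : christoffelK φ n w ζ = 0 := by
    rcases mul_eq_zero.mp h0 with h | h
    · exact absurd h h1
    · exact h
  have hpw : (BPoly φ n ζ).eval w = 0 := by
    rw [BPoly_eval, paraOrtho, christoffelK_symm, hK, map_zero, mul_zero]
  obtain ⟨s, hs⟩ := Polynomial.dvd_iff_isRoot.mpr hpw
  have hBne : BPoly φ n ζ ≠ 0 := BPoly_ne_zero φ (hdeg 0) (hlead 0) n ζ
  have hs0 : s ≠ 0 := by intro h; rw [h, mul_zero] at hs; exact hBne hs
  have hsd : s.degree ≤ ((n:ℕ) : WithBot ℕ) := by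
    have hB := BPoly_degree φ hdeg n ζ
    rw [hs, Polynomial.degree_mul, Polynomial.degree_X_sub_C,
      Polynomial.degree_eq_natDegree hs0] at hB
    rw [Polynomial.degree_eq_natDegree hs0]
    have h3 : 1 + s.natDegree ≤ n + 1 := by exact_mod_cast hB
    exact_mod_cast (by omega : s.natDegree ≤ n)
  have hsperp : ∀ q : Polynomial ℂ, q.degree ≤ ((n:ℕ):WithBot ℕ) → q.eval w = 0 →
      ip μ s q = 0 := by
    intro q hqd hqw
    obtain ⟨r, hrq⟩ := Polynomial.dvd_iff_isRoot.mpr hqw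
    rcases eq_or_ne r 0 with rfl | hr0
    · rw [mul_zero] at hrq; subst hrq; rw [ip]; simp
    have hXr : (Polynomial.X * r).degree ≤ ((n:ℕ):WithBot ℕ) := by
      rw [Polynomial.degree_mul, Polynomial.degree_X]
      rw [hrq, Polynomial.degree_mul, Polynomial.degree_X_sub_C] at hqd
      exact hqd
    have hperp := BP_perp μ hμT φ hdeg hlead horth n ζ r hXr
    have hae := ae_circle μ hμT
    have heq : ip μ (BPoly φ n ζ) (Polynomial.X * r) = -w * ip μ s q := by
      rw [ip, ip, ← MeasureTheory.integral_const_mul]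
      refine integral_congr_ae (hae.mono fun z hz => ?_)
      rw [hs, hrq]
      simp only [Polynomial.eval_mul, Polynomial.eval_sub, Polynomial.eval_X,
        Polynomial.eval_C, map_mul, map_sub]
      linear_combination (s.eval z * conj (r.eval z)) * hz
        - (s.eval z * conj (r.eval z)) * hww
    rw [heq] at hperp
    rcases mul_eq_zero.mp hperp with h | h
    · exact absurd h (neg_ne_zero.mpr hw0)
    · exact h
  have hKne : christoffelK φ n w w ≠ 0 := Kself_ne_s3 φ (hdeg 0) (hlead 0) n w
  set c0 := s.eval w / christoffelK φ n w w with hc0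
  have key2 : s = Polynomial.C c0 * KPoly φ n w := by
    have htw : (s - Polynomial.C c0 * KPoly φ n w).eval w = 0 := by
      simp only [Polynomial.eval_sub, Polynomial.eval_mul, Polynomial.eval_C]
      rw [KPoly_eval, hc0, div_mul_cancel₀ _ hKne, sub_self]
    have htd : (s - Polynomial.C c0 * KPoly φ n w).degree ≤ ((n:ℕ):WithBot ℕ) :=
      le_trans (Polynomial.degree_sub_le _ _)
        (max_le hsd (le_trans (degC_mul_le _ _) (KPoly_degree φ hdeg n w)))
    have e1 : ip μ s (s - Polynomial.C c0 * KPoly φ n w) = 0 := hsperp _ htd htw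
    have e2 : ip μ (KPoly φ n w) (s - Polynomial.C c0 * KPoly φ n w) = 0 := by
      rw [repro' μ hμT φ hdeg hlead horth n w _ htd, htw, map_zero]
    have e3 : ip μ (s - Polynomial.C c0 * KPoly φ n w)
        (s - Polynomial.C c0 * KPoly φ n w) = 0 := by
      rw [ip_sub_C_mul μ hμT, e1, e2, mul_zero, sub_zero]
    exact sub_eq_zero.mp (ip_def μ hμT hμinf _ e3)
  have hfact : Polynomial.X - Polynomial.C w
      = Polynomial.C (-w) * (1 - Polynomial.C (conj w) * Polynomial.X) := by
    have h4 : (-w) * conj w = -1 := by rw [neg_mul, hww]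
    rw [mul_sub, mul_one, ← mul_assoc, ← Polynomial.C_mul, h4]
    simp only [map_neg, Polynomial.C_1]
    ring
  refine ⟨-w * c0, ?_, ?_⟩
  · refine mul_ne_zero (neg_ne_zero.mpr hw0) ?_
    intro h
    apply hs0
    rw [key2, h, map_zero, zero_mul]
  · rw [hs, key2, hfact, BPoly, Polynomial.C_mul]
    ring

end

/-- If `ζ` and `ξ` are zeros of `B_{n+1}(w,·)` lying on the unit circle, then the zero sets
of the two polynomials `B_{n+1}(ζ,·)` and `B_{n+1}(ξ,·)` coincide. -/
theorem paraOrtho_zero_sets_eq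
    (μ : Measure ℂ) [IsFiniteMeasure μ]
    (hμT : μ (Metric.sphere (0 : ℂ) 1)ᶜ = 0)
    (hμinf : ∀ s : Finset ℂ, μ ((s : Set ℂ)ᶜ) ≠ 0)
    (φ : ℕ → Polynomial ℂ)
    (hdeg : ∀ k, (φ k).degree = (k : ℕ))
    (hlead : ∀ k, 0 < ((φ k).leadingCoeff).re ∧ ((φ k).leadingCoeff).im = 0)
    (horth : ∀ k m, ∫ z, (φ k).eval z * conj ((φ m).eval z) ∂μ
        = if k = m then 1 else 0)
    (n : ℕ) (w : ℂ) (hw : w ∈ Metric.sphere (0 : ℂ) 1)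
    (ζ ξ : ℂ) (hζ : ζ ∈ Metric.sphere (0 : ℂ) 1) (hξ : ξ ∈ Metric.sphere (0 : ℂ) 1)
    (hζ0 : paraOrtho φ n w ζ = 0) (hξ0 : paraOrtho φ n w ξ = 0) :
    {z : ℂ | paraOrtho φ n ζ z = 0} = {z : ℂ | paraOrtho φ n ξ z = 0} := by
  have hlead' : ∀ k, (φ k).leadingCoeff ≠ 0 := by
    intro k h
    have h1 := (hlead k).1
    rw [h] at h1
    simp at h1
  have hwn : ‖w‖ = 1 := mem_sphere_zero_iff_norm.mp hw
  have hζn : ‖ζ‖ = 1 := mem_sphere_zero_iff_norm.mp hζ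
  have hξn : ‖ξ‖ = 1 := mem_sphere_zero_iff_norm.mp hξ
  obtain ⟨c1, hc1, he1⟩ := key μ hμT hμinf φ hdeg hlead' horth n w ζ hwn hζn hζ0
  obtain ⟨c2, hc2, he2⟩ := key μ hμT hμinf φ hdeg hlead' horth n w ξ hwn hξn hξ0
  ext z
  simp only [Set.mem_setOf_eq]
  rw [← BPoly_eval, ← BPoly_eval, he1, he2]
  simp only [Polynomial.eval_mul, Polynomial.eval_C, mul_eq_zero, hc1, hc2, false_or]
end

section
/- Let μ be a finite positive Borel measure on the unit circle T with infinite support, K_n its Christoffel kernel, w ∈ T, and let ζ_{0n}, …, ζ_{nn} ∈ T be the n+1 (simple) zeros of the para-orthogonal polynomial B_{n+1}(w,·). Then the polynomials L_{jn}(z) := K_n(ζ_{jn}, z) / sqrt(K_n(ζ_{jn}, ζ_{jn})), for j = 0, …, n, form an orthonormal basis of the space Π_n of polynomials of degree at most n, equipped with the inner product of L²(μ); in particular ∫_T L_{jn} conj(L_{mn}) dμ = δ_{jm}. -/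
open MeasureTheory Polynomial Filter
open scoped ComplexConjugate Topology

/-- The Christoffel kernel `K_n(w,·)` as a polynomial in the second variable. -/
noncomputable def christoffelKPoly (φ : ℕ → Polynomial ℂ) (n : ℕ) (w : ℂ) : Polynomial ℂ :=
  ∑ j ∈ Finset.range (n + 1), Polynomial.C (conj ((φ j).eval w)) * φ j

/-- The polynomial `L_{jn}(z) = K_n(ζ_j, z) / sqrt(K_n(ζ_j, ζ_j))`
(here `K_n(ζ_j,ζ_j) = ∑_k |φ_k(ζ_j)|²` is a positive real number). -/
noncomputable def LPoly (φ : ℕ → Polynomial ℂ) (n : ℕ) (ζ : Fin (n + 1) → ℂ) (j : Fin (n + 1)) :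
    Polynomial ℂ :=
  ((Real.sqrt ((christoffelK φ n (ζ j) (ζ j)).re) : ℂ))⁻¹ • christoffelKPoly φ n (ζ j)

set_option linter.unusedSectionVars false
set_option linter.unusedVariables false

namespace LPAux


variable (μ : Measure ℂ) [IsFiniteMeasure μ]

/-- the L²(μ) pairing of two polynomials -/
noncomputable def pip (p q : Polynomial ℂ) : ℂ := ∫ z, p.eval z * conj (q.eval z) ∂μ

variable (hμT : μ (Metric.sphere (0 : ℂ) 1)ᶜ = 0)

include hμT

lemma ae_sphere : ∀ᵐ z ∂μ, z ∈ Metric.sphere (0:ℂ) 1 := by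
  rw [ae_iff]; convert hμT using 2; rfl

lemma integ (p q : Polynomial ℂ) :
    Integrable (fun z => p.eval z * conj (q.eval z)) μ := by
  have hc : Continuous fun z : ℂ => p.eval z * conj (q.eval z) :=
    (p.continuous_aeval).mul ((Complex.continuous_conj).comp q.continuous_aeval)
  obtain ⟨C, hC⟩ := (isCompact_sphere (0:ℂ) 1).exists_bound_of_continuousOn hc.continuousOn
  exact ⟨hc.aestronglyMeasurable, HasFiniteIntegral.of_bounded (C := C) <| by
    filter_upwards [ae_sphere μ hμT] with z hz using hC z hz⟩

omit hμT in
lemma pip_conj (p q : Polynomial ℂ) : pip μ p q = conj (pip μ q p) := by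
  rw [pip, pip, ← integral_conj]
  congr 1; funext z; simp [mul_comm]

lemma pip_add_left (p p' q : Polynomial ℂ) :
    pip μ (p + p') q = pip μ p q + pip μ p' q := by
  rw [pip, pip, pip, ← integral_add (integ μ hμT p q) (integ μ hμT p' q)]
  congr 1; funext z; simp [add_mul]

omit hμT in
lemma pip_smul_left (a : ℂ) (p q : Polynomial ℂ) :
    pip μ (a • p) q = a * pip μ p q := by
  rw [pip, pip, ← integral_const_mul]
  congr 1; funext z; simp [mul_assoc]

lemma pip_sub_left (p p' q : Polynomial ℂ) :
    pip μ (p - p') q = pip μ p q - pip μ p' q := by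
  have h := pip_add_left μ hμT (p - p') p' q
  rw [sub_add_cancel] at h
  rw [h]; ring

omit hμT in
lemma pip_smul_right (a : ℂ) (p q : Polynomial ℂ) :
    pip μ p (a • q) = conj a * pip μ p q := by
  rw [pip_conj, pip_smul_left μ _ _ _, map_mul, ← pip_conj]

omit hμT in
lemma pip_C_mul_left (a : ℂ) (p q : Polynomial ℂ) :
    pip μ (Polynomial.C a * p) q = a * pip μ p q := by
  rw [← smul_eq_C_mul, pip_smul_left]

omit hμT in
lemma pip_C_mul_right (a : ℂ) (p q : Polynomial ℂ) :
    pip μ p (Polynomial.C a * q) = conj a * pip μ p q := by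
  rw [← smul_eq_C_mul, pip_smul_right]

lemma pip_sum_left {ι : Type*} (s : Finset ι) (f : ι → Polynomial ℂ) (q : Polynomial ℂ) :
    pip μ (∑ i ∈ s, f i) q = ∑ i ∈ s, pip μ (f i) q := by
  classical
  induction s using Finset.induction_on with
  | empty => simp [pip]
  | insert _ _ h ih =>
      rw [Finset.sum_insert h, Finset.sum_insert h, pip_add_left μ hμT, ih]

lemma pip_sum_right {ι : Type*} (s : Finset ι) (f : ι → Polynomial ℂ) (q : Polynomial ℂ) :
    pip μ q (∑ i ∈ s, f i) = ∑ i ∈ s, pip μ q (f i) := by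
  rw [pip_conj, pip_sum_left μ hμT, map_sum]
  exact Finset.sum_congr rfl fun i _ => (pip_conj μ q (f i)).symm

lemma pip_X_mul (p q : Polynomial ℂ) :
    pip μ (Polynomial.X * p) (Polynomial.X * q) = pip μ p q := by
  rw [pip, pip]
  refine integral_congr_ae ?_
  filter_upwards [ae_sphere μ hμT] with z hz
  have h1 : z * conj z = 1 := by
    have habs : ‖z‖ = 1 := by simpa using hz
    rw [Complex.mul_conj]
    norm_cast
    simp [Complex.normSq_eq_norm_sq, habs]
  simp only [eval_mul, eval_X, map_mul]
  calc z * p.eval z * ((starRingEnd ℂ) z * (starRingEnd ℂ) (q.eval z))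
      = (z * conj z) * (p.eval z * conj (q.eval z)) := by ring
    _ = p.eval z * conj (q.eval z) := by rw [h1, one_mul]


omit hμT

variable (φ : ℕ → Polynomial ℂ) (hdeg : ∀ k, (φ k).degree = (k : ℕ))

include hdeg in
lemma phi_ne_zero (k : ℕ) : φ k ≠ 0 := by
  intro h
  have := hdeg k
  rw [h, degree_zero] at this
  exact absurd this (by simp)

include hdeg in
lemma span_phi : ∀ (m : ℕ) (p : Polynomial ℂ), p.degree < (m : ℕ) →
    p ∈ Submodule.span ℂ (φ '' Set.Iio m) := by
  intro m
  induction m with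
  | zero =>
      intro p hp
      have hb : p.degree = ⊥ := by
        have : p.degree < (0 : WithBot ℕ) := by exact_mod_cast hp
        exact Nat.WithBot.lt_zero_iff.mp this
      simp [Polynomial.degree_eq_bot.mp hb]
  | succ m ih =>
      intro p hp
      by_cases h0 : p = 0
      · simp [h0]
      by_cases hlt : p.degree < (m : ℕ)
      · exact Submodule.span_mono (Set.image_mono (fun x hx => lt_trans hx (Nat.lt_succ_self m))) (ih p hlt)
      · have hnd : p.natDegree < m + 1 := by
          have h1 := hp
          rw [degree_eq_natDegree h0] at h1
          exact_mod_cast h1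
        have hdp : p.degree = (m : ℕ) := by
          refine le_antisymm ?_ (le_of_not_gt hlt)
          rw [degree_eq_natDegree h0]
          exact_mod_cast Nat.lt_succ_iff.mp hnd
        have hφm0 : (φ m).leadingCoeff ≠ 0 := leadingCoeff_ne_zero.mpr (phi_ne_zero φ hdeg m)
        have hp0 : p.leadingCoeff ≠ 0 := leadingCoeff_ne_zero.mpr h0
        set c : ℂ := p.leadingCoeff / (φ m).leadingCoeff with hc
        have hc0 : c ≠ 0 := div_ne_zero hp0 hφm0
        have hlc : p.leadingCoeff = (Polynomial.C c * φ m).leadingCoeff := by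
          rw [leadingCoeff_mul, leadingCoeff_C, hc]
          field_simp
        have hdeq : p.degree = (Polynomial.C c * φ m).degree := by
          rw [degree_mul, degree_C hc0, hdeg m, hdp, zero_add]
        have hsub : (p - Polynomial.C c * φ m).degree < (m : ℕ) := by
          have := Polynomial.degree_sub_lt hdeq h0 hlc
          rwa [hdp] at this
        have hmem := ih _ hsub
        have hrw : p = (p - Polynomial.C c * φ m) + Polynomial.C c * φ m := by ring
        rw [hrw]
        refine Submodule.add_mem _ (Submodule.span_mono (Set.image_mono (fun x hx => lt_trans hx (Nat.lt_succ_self m))) hmem) ?_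
        rw [← smul_eq_C_mul]
        exact Submodule.smul_mem _ _ (Submodule.subset_span ⟨m, Nat.lt_succ_self m, rfl⟩)


variable (horth : ∀ k m, ∫ z, (φ k).eval z * conj ((φ m).eval z) ∂μ
        = if k = m then 1 else 0)

include horth in
lemma pip_phi (k m : ℕ) : pip μ (φ k) (φ m) = if k = m then 1 else 0 := horth k m

lemma eval_KPoly (n : ℕ) (w z : ℂ) :
    (christoffelKPoly φ n w).eval z = christoffelK φ n w z := by
  simp [christoffelKPoly, christoffelK, eval_finset_sum]

include hdeg in
lemma KPoly_mem_span (n : ℕ) (w : ℂ) :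
    christoffelKPoly φ n w ∈ Submodule.span ℂ (φ '' Set.Iio (n+1)) := by
  refine Submodule.sum_mem _ fun j hj => ?_
  rw [← smul_eq_C_mul]
  exact Submodule.smul_mem _ _
    (Submodule.subset_span ⟨j, Finset.mem_range.mp hj, rfl⟩)

include hμT horth in
lemma reproducing (n : ℕ) (w : ℂ) {p : Polynomial ℂ}
    (hp : p ∈ Submodule.span ℂ (φ '' Set.Iio (n+1))) :
    pip μ p (christoffelKPoly φ n w) = p.eval w := by
  induction hp using Submodule.span_induction with
  | mem x hx =>
      obtain ⟨k, hk, rfl⟩ := hx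
      rw [christoffelKPoly, pip_sum_right μ hμT]
      have : ∀ j ∈ Finset.range (n+1),
          pip μ (φ k) (Polynomial.C (conj ((φ j).eval w)) * φ j)
            = (φ j).eval w * (if k = j then 1 else 0) := by
        intro j _
        rw [pip_C_mul_right, pip_phi μ φ horth k j, RingHomCompTriple.comp_apply]
        simp
      rw [Finset.sum_congr rfl this, Finset.sum_mul_boole]
      simp [Set.mem_Iio.mp hk, Finset.mem_range]
  | zero => simp [pip]
  | add x y _ _ hx hy => rw [pip_add_left μ hμT, hx, hy, eval_add]
  | smul a x _ hx => rw [pip_smul_left, hx, eval_smul]; simp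

include hμT horth in
lemma pip_phi_hi {m k : ℕ} (hk : m ≤ k) {p : Polynomial ℂ}
    (hp : p ∈ Submodule.span ℂ (φ '' Set.Iio m)) :
    pip μ (φ k) p = 0 := by
  induction hp using Submodule.span_induction with
  | mem x hx =>
      obtain ⟨j, hj, rfl⟩ := hx
      simp only [Set.mem_Iio] at hj
      rw [pip_phi μ φ horth k j, if_neg]
      omega
  | zero => simp [pip]
  | add x y _ _ hx hy =>
      rw [pip_conj, pip_add_left μ hμT, map_add, ← pip_conj, ← pip_conj, hx, hy, add_zero]
  | smul a x _ hx =>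
      rw [pip_smul_right, hx, mul_zero]

include hμT horth in
lemma pip_hi_phi {m k : ℕ} (hk : m ≤ k) {p : Polynomial ℂ}
    (hp : p ∈ Submodule.span ℂ (φ '' Set.Iio m)) :
    pip μ p (φ k) = 0 := by
  rw [pip_conj, pip_phi_hi μ hμT φ horth hk hp, map_zero]
variable (hlead : ∀ k, 0 < ((φ k).leadingCoeff).re ∧ ((φ k).leadingCoeff).im = 0)

/-- para-orthogonal polynomial as a polynomial -/
noncomputable def Bp (φ : ℕ → Polynomial ℂ) (n : ℕ) (w : ℂ) : Polynomial ℂ :=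
  (1 - Polynomial.C (conj w) * Polynomial.X) * christoffelKPoly φ n w

lemma eval_Bp (n : ℕ) (w z : ℂ) : (Bp φ n w).eval z = paraOrtho φ n w z := by
  simp [Bp, paraOrtho, eval_KPoly]

lemma one_sub_conj_mul_ne {a b : ℂ} (ha : ‖a‖ = 1) (hab : a ≠ b) :
    1 - conj a * b ≠ 0 := by
  intro h
  have h1 : conj a * b = 1 := by
    have := sub_eq_zero.mp h; exact this.symm
  have h2 : conj a * a = 1 := by
    rw [mul_comm, Complex.mul_conj]
    norm_cast
    simp [Complex.normSq_eq_norm_sq, ha]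
  have ha0 : a ≠ 0 := by intro h0; rw [h0] at ha; simp at ha
  have hca : conj a ≠ 0 := by
    intro h0; apply ha0
    have := congrArg (starRingEnd ℂ) h0
    simpa using this
  have : b = a := mul_left_cancel₀ hca (h1.trans h2.symm)
  exact hab this.symm

include hdeg hlead in
lemma phi0_eval_ne (z : ℂ) : (φ 0).eval z ≠ 0 := by
  have h0 : (φ 0).degree ≤ 0 := le_of_eq (by exact_mod_cast hdeg 0)
  have : φ 0 = Polynomial.C ((φ 0).coeff 0) := eq_C_of_degree_le_zero h0
  rw [this, eval_C]
  have hnd : (φ 0).natDegree = 0 := natDegree_eq_zero_iff_degree_le_zero.mpr h0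
  have := (hlead 0).1
  rw [Polynomial.leadingCoeff, hnd] at this
  intro h; rw [h] at this; simp at this

lemma K_diag (n : ℕ) (ζ : ℂ) : christoffelK φ n ζ ζ
    = ((∑ j ∈ Finset.range (n+1), Complex.normSq ((φ j).eval ζ) : ℝ) : ℂ) := by
  rw [christoffelK]
  push_cast
  refine Finset.sum_congr rfl fun j _ => ?_
  rw [mul_comm, Complex.mul_conj]

include hdeg hlead in
lemma K_diag_re_pos (n : ℕ) (ζ : ℂ) : 0 < (christoffelK φ n ζ ζ).re := by
  rw [K_diag φ n ζ, Complex.ofReal_re]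
  refine Finset.sum_pos' (fun j _ => Complex.normSq_nonneg _) ⟨0, Finset.mem_range.mpr (Nat.succ_pos n), ?_⟩
  exact (Complex.normSq_pos).mpr (phi0_eval_ne φ hdeg hlead ζ)

include hdeg hlead in
lemma K_diag_ne (n : ℕ) (ζ : ℂ) : christoffelK φ n ζ ζ ≠ 0 := by
  intro h
  have := K_diag_re_pos φ hdeg hlead n ζ
  rw [h] at this; simp at this

include hdeg hlead in
lemma Bp_ne_zero (n : ℕ) (w : ℂ) : Bp φ n w ≠ 0 := by
  refine mul_ne_zero ?_ ?_
  · intro h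
    have : (1 - Polynomial.C (conj w) * Polynomial.X).eval 0 = 0 := by rw [h]; simp
    simp at this
  · intro h
    have : (christoffelKPoly φ n w).eval w = 0 := by rw [h]; simp
    rw [eval_KPoly] at this
    exact K_diag_ne φ hdeg hlead n w this

include hμT in
lemma pip_add_right (p q q' : Polynomial ℂ) :
    pip μ p (q + q') = pip μ p q + pip μ p q' := by
  rw [pip_conj, pip_add_left μ hμT, map_add, ← pip_conj, ← pip_conj]

include hμT hdeg hlead horth in
lemma phi_eval_ne_zero_circle (k : ℕ) {ζ : ℂ} (hζ : ‖ζ‖ = 1) :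
    (φ k).eval ζ ≠ 0 := by
  cases k with
  | zero => exact phi0_eval_ne φ hdeg hlead ζ
  | succ m =>
      intro h
      obtain ⟨q, hq⟩ := dvd_iff_isRoot.mpr (show (φ (m+1)).IsRoot ζ from h)
      have hq0 : q ≠ 0 := by
        intro h0; rw [h0, mul_zero] at hq
        exact phi_ne_zero φ hdeg (m+1) hq
      have hdq : q.degree < ((m+1 : ℕ) : WithBot ℕ) := by
        have h1 : (φ (m+1)).degree = 1 + q.degree := by
          rw [hq, degree_mul, degree_X_sub_C]
        rw [hdeg (m+1)] at h1
        rw [degree_eq_natDegree hq0] at h1 ⊢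
        have : ((m+1 : ℕ) : WithBot ℕ) = 1 + (q.natDegree : WithBot ℕ) := h1
        have h2 : m + 1 = 1 + q.natDegree := by exact_mod_cast this
        exact_mod_cast by omega
      have hqs : q ∈ Submodule.span ℂ (φ '' Set.Iio (m+1)) := span_phi φ hdeg (m+1) q hdq
      have hXq : Polynomial.X * q = φ (m+1) + Polynomial.C ζ * q := by
        rw [hq]; ring
      have hiso := pip_X_mul μ hμT q q
      rw [hXq, pip_add_left μ hμT, pip_add_right μ hμT, pip_add_right μ hμT,
        pip_C_mul_left, pip_C_mul_right, pip_C_mul_right, pip_C_mul_left] at hiso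
      have e1 : pip μ (φ (m+1)) (φ (m+1)) = 1 := by rw [pip_phi μ φ horth]; simp
      have e2 : pip μ (φ (m+1)) q = 0 := pip_phi_hi μ hμT φ horth (le_refl (m+1)) hqs
      have e3 : pip μ q (φ (m+1)) = 0 := pip_hi_phi μ hμT φ horth (le_refl (m+1)) hqs
      have e4 : ζ * conj ζ = 1 := by
        rw [Complex.mul_conj]; norm_cast; simp [Complex.normSq_eq_norm_sq, hζ]
      rw [e1, e2, e3, mul_zero, add_zero, mul_zero, zero_add, ← mul_assoc,
        mul_comm ((starRingEnd ℂ) ζ) ζ, e4, one_mul] at hiso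
      exact one_ne_zero (α := ℂ) (by linear_combination hiso)

include hdeg in
lemma KPoly_degree (n : ℕ) (w : ℂ) : (christoffelKPoly φ n w).degree ≤ (n : ℕ) := by
  refine le_trans (degree_sum_le _ _) (Finset.sup_le fun j hj => ?_)
  rw [← smul_eq_C_mul]
  refine le_trans (degree_smul_le _ _) ?_
  rw [hdeg j]
  exact_mod_cast Nat.lt_succ_iff.mp (Finset.mem_range.mp hj)

include hdeg in
lemma Bp_degree (n : ℕ) (w : ℂ) : (Bp φ n w).degree ≤ ((n+1 : ℕ) : WithBot ℕ) := by
  refine le_trans (degree_mul_le _ _) ?_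
  have h1 : (1 - Polynomial.C (conj w) * Polynomial.X).degree ≤ ((1 : ℕ) : WithBot ℕ) := by
    refine le_trans (degree_sub_le _ _) (max_le ?_ ?_)
    · rw [degree_one]; exact_mod_cast Nat.zero_le 1
    · rw [← smul_eq_C_mul]
      refine le_trans (degree_smul_le _ _) ?_
      rw [degree_X]
      exact le_of_eq (by norm_cast)
  calc (1 - Polynomial.C (conj w) * Polynomial.X).degree + (christoffelKPoly φ n w).degree
      ≤ ((1:ℕ) : WithBot ℕ) + ((n:ℕ) : WithBot ℕ) := add_le_add h1 (KPoly_degree φ hdeg n w)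
    _ = ((n+1 : ℕ) : WithBot ℕ) := by
        push_cast; ring

include hdeg in
lemma Bp_mem (n : ℕ) (w : ℂ) : Bp φ n w ∈ degreeLT ℂ (n+2) := by
  rw [mem_degreeLT]
  exact lt_of_le_of_lt (Bp_degree φ hdeg n w) (by exact_mod_cast Nat.lt_succ_self (n+1))

include hdeg in
lemma Xphi_mem_span (n k : ℕ) (hk : k < n) :
    Polynomial.X * φ k ∈ Submodule.span ℂ (φ '' Set.Iio (n+1)) := by
  refine span_phi φ hdeg (n+1) _ ?_
  refine lt_of_le_of_lt (degree_mul_le _ _) ?_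
  rw [degree_X, hdeg k]
  exact_mod_cast by omega

include hdeg in
lemma phi_mem_span (m k : ℕ) (hk : k < m) :
    φ k ∈ Submodule.span ℂ (φ '' Set.Iio m) :=
  Submodule.subset_span ⟨k, hk, rfl⟩

include hμT hdeg horth in
lemma Bp_S (n : ℕ) {ζ : ℂ} (hζ : ‖ζ‖ = 1) (k : ℕ) (hk : k < n) :
    pip μ (Bp φ n ζ) (Polynomial.X * φ k) = 0 := by
  set K := christoffelKPoly φ n ζ with hK
  have hBp : Bp φ n ζ = K - Polynomial.C (conj ζ) * (Polynomial.X * K) := by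
    rw [Bp]; ring
  rw [hBp, pip_sub_left μ hμT, pip_C_mul_left]
  have h1 : pip μ K (Polynomial.X * φ k) = conj ((Polynomial.X * φ k).eval ζ) := by
    rw [pip_conj, reproducing μ hμT φ horth n ζ (Xphi_mem_span φ hdeg n k hk)]
  have h2 : pip μ (Polynomial.X * K) (Polynomial.X * φ k) = conj ((φ k).eval ζ) := by
    rw [pip_X_mul μ hμT, pip_conj,
      reproducing μ hμT φ horth n ζ (phi_mem_span φ hdeg (n+1) k (by omega))]
  rw [h1, h2]
  simp only [eval_mul, eval_X, map_mul]
  ring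

lemma span_of_li_degreeLT (m : ℕ) (v : Fin m → Polynomial ℂ)
    (hv : ∀ i, v i ∈ degreeLT ℂ m) (hind : LinearIndependent ℂ v) :
    ∀ p ∈ degreeLT ℂ m, p ∈ Submodule.span ℂ (Set.range v) := by
  intro p hp
  cases m with
  | zero =>
      rw [mem_degreeLT] at hp
      have : p = 0 := degree_eq_bot.mp (Nat.WithBot.lt_zero_iff.mp (by exact_mod_cast hp))
      simp [this]
  | succ m =>
      set V := degreeLT ℂ (m+1)
      set v' : Fin (m+1) → V := fun i => ⟨v i, hv i⟩ with hv'
      have hind' : LinearIndependent ℂ v' := by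
        refine LinearIndependent.of_comp V.subtype ?_
        have : V.subtype ∘ v' = v := rfl
        rw [this]; exact hind
      have hfr : Module.finrank ℂ V = m + 1 := by
        rw [(Polynomial.degreeLTEquiv ℂ (m+1)).finrank_eq, Module.finrank_fin_fun]
      have hspan : Submodule.span ℂ (Set.range v') = ⊤ :=
        hind'.span_eq_top_of_card_eq_finrank (by simp [hfr])
      have h2 : (⟨p, hp⟩ : V) ∈ Submodule.span ℂ (Set.range v') := by
        rw [hspan]; trivial
      have h3 := Submodule.mem_map_of_mem (f := V.subtype) h2
      rw [Submodule.map_span] at h3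
      have h4 : V.subtype '' Set.range v' = Set.range v := by
        rw [← Set.range_comp]
        rfl
      rw [h4] at h3
      exact h3

/-- the auxiliary family spanning polynomials of degree < n+2 -/
noncomputable def uFam (φ : ℕ → Polynomial ℂ) (n : ℕ) (ζ : ℂ) : Fin (n+2) → Polynomial ℂ :=
  fun i => if (i : ℕ) < n then Polynomial.X * φ (i : ℕ)
    else if (i : ℕ) = n then φ (n+1) else Bp φ n ζ

include hdeg in
lemma uFam_mem (n : ℕ) (ζ : ℂ) (i : Fin (n+2)) : uFam φ n ζ i ∈ degreeLT ℂ (n+2) := by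
  rw [uFam]
  split_ifs with h1 h2
  · rw [mem_degreeLT]
    refine lt_of_le_of_lt (degree_mul_le _ _) ?_
    rw [degree_X, hdeg i]
    exact_mod_cast by omega
  · rw [mem_degreeLT, hdeg (n+1)]
    exact_mod_cast by omega
  · exact Bp_mem φ hdeg n ζ

omit hμT in
lemma pip_zero_left (q : Polynomial ℂ) : pip μ 0 q = 0 := by simp [pip]

include hμT hdeg horth in
lemma uFam_pairing (n : ℕ) {ζ : ℂ} (hζ : ‖ζ‖ = 1) (i : Fin (n+2)) (k : ℕ) (hk : k < n) :
    pip μ (uFam φ n ζ i) (Polynomial.X * φ k) = if (i : ℕ) = k then 1 else 0 := by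
  rw [uFam]
  by_cases h1 : (i : ℕ) < n
  · rw [if_pos h1, pip_X_mul μ hμT, pip_phi μ φ horth]
  · rw [if_neg h1]
    by_cases h2 : (i : ℕ) = n
    · rw [if_pos h2, pip_phi_hi μ hμT φ horth (le_refl (n+1)) (Xphi_mem_span φ hdeg n k hk),
        if_neg (by omega)]
    · rw [if_neg h2, Bp_S μ hμT φ hdeg horth n hζ k hk, if_neg (by omega)]

lemma eval_Bp_self (n : ℕ) {ζ : ℂ} (hζ : ‖ζ‖ = 1) : (Bp φ n ζ).eval ζ = 0 := by
  rw [eval_Bp, paraOrtho]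
  have : 1 - conj ζ * ζ = 0 := by
    rw [mul_comm, Complex.mul_conj]
    norm_cast
    simp [Complex.normSq_eq_norm_sq, hζ]
  rw [this, zero_mul]

lemma uFam_reduce (n : ℕ) (ζ : ℂ) (g : Fin (n+2) → ℂ)
    (hg : ∀ i : Fin (n+2), (i : ℕ) < n → g i = 0) :
    ∑ i, g i • uFam φ n ζ i
      = g ⟨n, by omega⟩ • φ (n+1) + g ⟨n+1, by omega⟩ • Bp φ n ζ := by
  classical
  set a : Fin (n+2) := ⟨n, by omega⟩
  set b : Fin (n+2) := ⟨n+1, by omega⟩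
  have hab : a ≠ b := by
    intro h; have := congrArg (Fin.val) h; simp [a, b] at this
  have hsub : ({a, b} : Finset (Fin (n+2))) ⊆ Finset.univ := Finset.subset_univ _
  have h1 : ∑ i, g i • uFam φ n ζ i = ∑ i ∈ ({a, b} : Finset (Fin (n+2))), g i • uFam φ n ζ i := by
    refine (Finset.sum_subset hsub ?_).symm
    intro x _ hx
    simp only [Finset.mem_insert, Finset.mem_singleton] at hx
    push_neg at hx
    have hxa : (x : ℕ) ≠ n := fun h => hx.1 (Fin.ext h)
    have hxb : (x : ℕ) ≠ n + 1 := fun h => hx.2 (Fin.ext h)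
    have : (x : ℕ) < n := by have := x.isLt; omega
    rw [hg x this, zero_smul]
  rw [h1, Finset.sum_pair hab]
  have ha' : uFam φ n ζ a = φ (n+1) := by rw [uFam]; simp [a]
  have hb' : uFam φ n ζ b = Bp φ n ζ := by
    rw [uFam]; simp [b]
  rw [ha', hb']

include hμT hdeg horth hlead in
lemma uFam_li (n : ℕ) {ζ : ℂ} (hζ : ‖ζ‖ = 1) :
    LinearIndependent ℂ (uFam φ n ζ) := by
  rw [Fintype.linearIndependent_iff]
  intro g hg
  have hlow : ∀ i : Fin (n+2), (i : ℕ) < n → g i = 0 := by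
    intro j hj
    have h := congrArg (fun p => pip μ p (Polynomial.X * φ (j : ℕ))) hg
    rw [pip_sum_left μ hμT, pip_zero_left] at h
    have hterm : ∀ i : Fin (n+2), pip μ (g i • uFam φ n ζ i) (Polynomial.X * φ (j:ℕ))
        = g i * (if (i:ℕ) = (j:ℕ) then 1 else 0) := fun i => by
      rw [pip_smul_left, uFam_pairing μ hμT φ hdeg horth n hζ i (j:ℕ) hj]
    rw [Finset.sum_congr rfl (fun i _ => hterm i)] at h
    rw [Finset.sum_eq_single j (fun b _ hb => by
        rw [if_neg (fun hvb => hb (Fin.ext hvb)), mul_zero])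
      (fun hj' => absurd (Finset.mem_univ j) hj')] at h
    rw [if_pos rfl, mul_one] at h
    exact h.symm ▸ rfl
  have hred := uFam_reduce φ n ζ g hlow
  rw [hg] at hred
  set a : Fin (n+2) := ⟨n, by omega⟩
  set b : Fin (n+2) := ⟨n+1, by omega⟩
  have heval := congrArg (fun p => p.eval ζ) hred.symm
  simp only [eval_add, eval_smul, smul_eq_mul, eval_zero] at heval
  rw [eval_Bp_self φ n hζ, mul_zero, add_zero] at heval
  have hga : g a = 0 := by
    rcases mul_eq_zero.mp heval with h | h
    · exact h
    · exact absurd h (phi_eval_ne_zero_circle μ hμT φ hdeg horth hlead (n+1) hζ)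
  rw [hga, zero_smul, zero_add] at hred
  have hgb : g b = 0 := by
    rcases smul_eq_zero.mp hred.symm with h | h
    · exact h
    · exact absurd h (Bp_ne_zero φ hdeg hlead n ζ)
  intro i
  by_cases h1 : (i : ℕ) < n
  · exact hlow i h1
  · by_cases h2 : (i : ℕ) = n
    · have : i = a := Fin.ext h2
      rw [this]; exact hga
    · have : i = b := Fin.ext (by simp only [b]; have := i.isLt; omega)
      rw [this]; exact hgb

include hμT hdeg horth hlead in
lemma eq_smul_Bp (n : ℕ) {ζ : ℂ} (hζ : ‖ζ‖ = 1) {q : Polynomial ℂ}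
    (hqd : q ∈ degreeLT ℂ (n+2))
    (hS : ∀ k, k < n → pip μ q (Polynomial.X * φ k) = 0)
    (h0 : q.eval ζ = 0) : ∃ d : ℂ, q = d • Bp φ n ζ := by
  have hspan := span_of_li_degreeLT (n+2) (uFam φ n ζ) (uFam_mem φ hdeg n ζ)
    (uFam_li μ hμT φ hdeg horth hlead n hζ) q hqd
  obtain ⟨c, hc⟩ := Submodule.mem_span_range_iff_exists_fun ℂ |>.mp hspan
  have hlow : ∀ i : Fin (n+2), (i : ℕ) < n → c i = 0 := by
    intro j hj
    have h := congrArg (fun p => pip μ p (Polynomial.X * φ (j : ℕ))) hc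
    rw [pip_sum_left μ hμT] at h
    have hterm : ∀ i : Fin (n+2), pip μ (c i • uFam φ n ζ i) (Polynomial.X * φ (j:ℕ))
        = c i * (if (i:ℕ) = (j:ℕ) then 1 else 0) := fun i => by
      rw [pip_smul_left, uFam_pairing μ hμT φ hdeg horth n hζ i (j:ℕ) hj]
    rw [Finset.sum_congr rfl (fun i _ => hterm i)] at h
    rw [Finset.sum_eq_single j (fun b _ hb => by
        rw [if_neg (fun hvb => hb (Fin.ext hvb)), mul_zero])
      (fun hj' => absurd (Finset.mem_univ j) hj')] at h
    rw [if_pos rfl, mul_one] at h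
    rw [h, hS (j:ℕ) hj]
  have hred := uFam_reduce φ n ζ c hlow
  rw [hc] at hred
  set a : Fin (n+2) := ⟨n, by omega⟩
  set b : Fin (n+2) := ⟨n+1, by omega⟩
  have heval := congrArg (fun p => p.eval ζ) hred
  simp only [eval_add, eval_smul, smul_eq_mul] at heval
  rw [eval_Bp_self φ n hζ, mul_zero, add_zero, h0] at heval
  have hca : c a = 0 := by
    rcases mul_eq_zero.mp heval.symm with h | h
    · exact h
    · exact absurd h (phi_eval_ne_zero_circle μ hμT φ hdeg horth hlead (n+1) hζ)
  rw [hca, zero_smul, zero_add] at hred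
  exact ⟨c b, hred⟩

include hμT hdeg horth hlead in
lemma K_offdiag (n : ℕ) {w ζ ξ : ℂ} (hw : ‖w‖ = 1)
    (hζ : ‖ζ‖ = 1) (hξ : ‖ξ‖ = 1) (hne : ζ ≠ ξ)
    (hz1 : paraOrtho φ n w ζ = 0) (hz2 : paraOrtho φ n w ξ = 0) :
    christoffelK φ n ζ ξ = 0 := by
  obtain ⟨d, hd⟩ := eq_smul_Bp μ hμT φ hdeg horth hlead n hζ (Bp_mem φ hdeg n w)
    (fun k hk => Bp_S μ hμT φ hdeg horth n hw k hk)
    (by rw [eval_Bp]; exact hz1)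
  have hd0 : d ≠ 0 := by
    intro h; rw [h, zero_smul] at hd
    exact Bp_ne_zero φ hdeg hlead n w hd
  have heval := congrArg (fun p => p.eval ξ) hd
  simp only [eval_smul, smul_eq_mul] at heval
  rw [eval_Bp, eval_Bp, hz2] at heval
  rw [paraOrtho] at heval
  rcases mul_eq_zero.mp heval.symm with h | h
  · exact absurd h hd0
  · rcases mul_eq_zero.mp h with h' | h'
    · exact absurd h' (one_sub_conj_mul_ne hζ hne)
    · exact h'

omit hμT in
lemma K_diag_eq_re (n : ℕ) (ζ : ℂ) :
    christoffelK φ n ζ ζ = (((christoffelK φ n ζ ζ).re : ℝ) : ℂ) := by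
  rw [K_diag]; simp

include hμT hdeg horth hlead in
lemma LPoly_pip (n : ℕ) (w : ℂ) (hw : ‖w‖ = 1) (ζ : Fin (n + 1) → ℂ)
    (hζT : ∀ j, ‖ζ j‖ = 1) (hζinj : Function.Injective ζ)
    (hζ0 : ∀ j, paraOrtho φ n w (ζ j) = 0) (j m : Fin (n+1)) :
    pip μ (LPoly φ n ζ j) (LPoly φ n ζ m) = if j = m then 1 else 0 := by
  rw [LPoly, LPoly, pip_smul_left, pip_smul_right,
    reproducing μ hμT φ horth n (ζ m) (KPoly_mem_span φ hdeg n (ζ j)), eval_KPoly]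
  rcases eq_or_ne j m with rfl | hne
  · rw [if_pos rfl]
    set c : ℝ := (christoffelK φ n (ζ j) (ζ j)).re with hc
    have hcpos : 0 < c := K_diag_re_pos φ hdeg hlead n (ζ j)
    have hKc : christoffelK φ n (ζ j) (ζ j) = (c : ℂ) := K_diag_eq_re φ n (ζ j)
    rw [hKc]
    have hconj : conj (((Real.sqrt c : ℝ) : ℂ))⁻¹ = (((Real.sqrt c : ℝ) : ℂ))⁻¹ := by
      rw [map_inv₀, Complex.conj_ofReal]
    rw [hconj]
    have hs : Real.sqrt c ≠ 0 := by positivity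
    norm_cast
    field_simp
    exact (Real.sq_sqrt hcpos.le).symm
  · rw [if_neg hne]
    rw [K_offdiag μ hμT φ hdeg horth hlead n hw (hζT j) (hζT m)
      (fun h => hne (hζinj h)) (hζ0 j) (hζ0 m), mul_zero, mul_zero]

include hdeg in
lemma LPoly_degree (n : ℕ) (ζ : Fin (n + 1) → ℂ) (j : Fin (n+1)) :
    (LPoly φ n ζ j).degree ≤ (n : ℕ) := by
  rw [LPoly]
  exact le_trans (degree_smul_le _ _) (KPoly_degree φ hdeg n (ζ j))

include hμT hdeg horth hlead in
lemma LPoly_span (n : ℕ) (w : ℂ) (hw : ‖w‖ = 1) (ζ : Fin (n + 1) → ℂ)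
    (hζT : ∀ j, ‖ζ j‖ = 1) (hζinj : Function.Injective ζ)
    (hζ0 : ∀ j, paraOrtho φ n w (ζ j) = 0) {p : Polynomial ℂ} (hp : p.degree ≤ (n : ℕ)) :
    p ∈ Submodule.span ℂ (Set.range (LPoly φ n ζ)) := by
  refine span_of_li_degreeLT (n+1) (LPoly φ n ζ) (fun i => ?_) ?_ p ?_
  · rw [mem_degreeLT]
    exact lt_of_le_of_lt (LPoly_degree φ hdeg n ζ i) (by exact_mod_cast Nat.lt_succ_self n)
  · rw [Fintype.linearIndependent_iff]
    intro g hg j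
    have h := congrArg (fun q => pip μ q (LPoly φ n ζ j)) hg
    rw [pip_sum_left μ hμT, pip_zero_left] at h
    have hterm : ∀ i : Fin (n+1), pip μ (g i • LPoly φ n ζ i) (LPoly φ n ζ j)
        = g i * (if i = j then 1 else 0) := fun i => by
      rw [pip_smul_left, LPoly_pip μ hμT φ hdeg horth hlead n w hw ζ hζT hζinj hζ0 i j]
    rw [Finset.sum_congr rfl (fun i _ => hterm i)] at h
    rw [Finset.sum_eq_single j (fun b _ hb => by rw [if_neg hb, mul_zero])
      (fun hj' => absurd (Finset.mem_univ j) hj')] at h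
    rw [if_pos rfl, mul_one] at h
    exact h.symm ▸ rfl
  · rw [mem_degreeLT]
    exact lt_of_le_of_lt hp (by exact_mod_cast Nat.lt_succ_self n)

end LPAux

/-- The polynomials `L_{jn}(z) = K_n(ζ_{jn}, z)/sqrt(K_n(ζ_{jn}, ζ_{jn}))`, `j = 0,…,n`,
built on the `n+1` (simple) zeros `ζ_{0n},…,ζ_{nn} ∈ T` of the para-orthogonal polynomial
`B_{n+1}(w,·)`, form an orthonormal basis of `Π_n` (polynomials of degree at most `n`)
for the `L²(μ)` inner product: they lie in `Π_n`, satisfy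
`∫_T L_{jn} conj(L_{mn}) dμ = δ_{jm}`, and span `Π_n`. -/
theorem LPoly_orthonormal_basis
    (μ : Measure ℂ) [IsFiniteMeasure μ]
    (hμT : μ (Metric.sphere (0 : ℂ) 1)ᶜ = 0)
    (hμinf : ∀ s : Finset ℂ, μ ((s : Set ℂ)ᶜ) ≠ 0)
    (φ : ℕ → Polynomial ℂ)
    (hdeg : ∀ k, (φ k).degree = (k : ℕ))
    (hlead : ∀ k, 0 < ((φ k).leadingCoeff).re ∧ ((φ k).leadingCoeff).im = 0)
    (horth : ∀ k m, ∫ z, (φ k).eval z * conj ((φ m).eval z) ∂μ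
        = if k = m then 1 else 0)
    (n : ℕ) (w : ℂ) (hw : w ∈ Metric.sphere (0 : ℂ) 1)
    (ζ : Fin (n + 1) → ℂ)
    (hζT : ∀ j, ζ j ∈ Metric.sphere (0 : ℂ) 1)
    (hζinj : Function.Injective ζ)
    (hζ0 : ∀ j, paraOrtho φ n w (ζ j) = 0) :
    (∀ j, (LPoly φ n ζ j).degree ≤ n) ∧
    (∀ j m, ∫ z, (LPoly φ n ζ j).eval z * conj ((LPoly φ n ζ m).eval z) ∂μ
        = if j = m then 1 else 0) ∧
    (∀ p : Polynomial ℂ, p.degree ≤ n →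
        p ∈ Submodule.span ℂ (Set.range (LPoly φ n ζ))) := by
  have hw' : ‖w‖ = 1 := by simpa using hw
  have hζT' : ∀ j, ‖ζ j‖ = 1 := fun j => by simpa using hζT j
  refine ⟨fun j => LPAux.LPoly_degree φ hdeg n ζ j, fun j m => ?_, fun p hp =>
    LPAux.LPoly_span μ hμT φ hdeg horth hlead n w hw' ζ hζT' hζinj hζ0 hp⟩
  exact LPAux.LPoly_pip μ hμT φ hdeg horth hlead n w hw' ζ hζT' hζinj hζ0 j m
end

section
/- Let μ be a finite positive Borel measure on the unit circle T with infinite support, K_n its Christoffel kernel, w ∈ T, and ζ_{0n}, …, ζ_{nn} ∈ T the zeros of the para-orthogonal polynomial B_{n+1}(w,·). Then the total mass of the discrete measure μ_n := Σ_{j=0}^n (1/K_n(ζ_{jn}, ζ_{jn})) δ_{ζ_{jn}} equals the total mass of μ; equivalently, Σ_{j=0}^n 1/K_n(ζ_{jn}, ζ_{jn}) = μ(T). -/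
open MeasureTheory Polynomial Filter
open scoped ComplexConjugate Topology

/-- The discrete measure `μ_n = ∑_{j=0}^n (1/K_n(ζ_j,ζ_j)) δ_{ζ_j}`
(recall `K_n(ζ,ζ) = ∑_k |φ_k(ζ)|²` is a positive real number for `ζ ∈ T`). -/
noncomputable def nodeMeasure (φ : ℕ → Polynomial ℂ) (n : ℕ) (ζ : Fin (n + 1) → ℂ) :
    Measure ℂ :=
  ∑ j : Fin (n + 1),
    ENNReal.ofReal (((christoffelK φ n (ζ j) (ζ j)).re)⁻¹) • Measure.dirac (ζ j)

lemma span_phi (φ : ℕ → Polynomial ℂ) (hdeg : ∀ k, (φ k).degree = (k : ℕ)) :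
    ∀ (d : ℕ) (p : ℂ[X]), p.degree < (d : ℕ) → ∃ b : Fin d → ℂ, p = ∑ i, (b i) • φ i := by
  intro d
  induction d with
  | zero =>
    intro p hp
    refine ⟨fun i => 0, ?_⟩
    simp only [Finset.univ_eq_empty, Finset.sum_empty]
    by_contra hne
    rw [Polynomial.degree_eq_natDegree hne] at hp
    exact absurd hp (by exact_mod_cast not_lt.mpr (Nat.zero_le _))
  | succ d ih =>
    intro p hp
    have hφd : (φ d).coeff d ≠ 0 := by
      have h1 : (φ d).natDegree = d := natDegree_eq_of_degree_eq_some (hdeg d)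
      rw [← h1]
      exact Polynomial.coeff_ne_zero_of_eq_degree (by rw [h1]; exact hdeg d)
    set c := p.coeff d / (φ d).coeff d with hc
    set q := p - C c * φ d with hq
    have hqd : q.degree < (d : ℕ) := by
      rw [Polynomial.degree_lt_iff_coeff_zero]
      intro m hm
      rw [hq, Polynomial.coeff_sub, Polynomial.coeff_C_mul]
      rcases eq_or_lt_of_le hm with h | h
      · have : (d : ℕ) = m := by exact_mod_cast h
        subst this
        rw [hc]
        field_simp
        simp
      · have hm' : (d : ℕ) < (m : ℕ) := by exact_mod_cast h
        have h2 : p.coeff m = 0 := by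
          apply Polynomial.coeff_eq_zero_of_degree_lt
          calc p.degree < ((d+1 : ℕ) : WithBot ℕ) := hp
          _ ≤ (m : ℕ) := by exact_mod_cast Nat.succ_le_of_lt hm'
        have h3 : (φ d).coeff m = 0 := by
          apply Polynomial.coeff_eq_zero_of_degree_lt
          rw [hdeg d]; exact_mod_cast hm'
        rw [h2, h3, mul_zero, sub_zero]
    obtain ⟨b, hb⟩ := ih q hqd
    refine ⟨Fin.snoc b c, ?_⟩
    rw [Fin.sum_univ_castSucc]
    simp only [Fin.snoc_castSucc, Fin.snoc_last]
    have : p = q + C c * φ d := by rw [hq]; ring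
    rw [this, hb]
    congr 1
    rw [Polynomial.smul_eq_C_mul, Fin.val_last]

lemma cd_formula (φ : ℕ → Polynomial ℂ) (n : ℕ)
    (a : Fin (n+1) → Fin (n+2) → ℂ)
    (ha : ∀ m : Fin (n+1), (X : ℂ[X]) * φ m = ∑ p : Fin (n+2), (a m p) • φ p)
    (hcol : ∀ k m : Fin (n+1), ∑ p : Fin (n+2), a k p * conj (a m p) = if k = m then 1 else 0) :
    ∃ g : ℂ → ℂ, ∀ t s : ℂ, (1 - conj t * s) * christoffelK φ n t s
      = conj (g t) * g s - conj (eval t (φ (n+1))) * eval s (φ (n+1)) := by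
  classical
  set v : Fin (n+2) → EuclideanSpace ℂ (Fin (n+2)) :=
    fun i => if h : (i:ℕ) < n+1 then WithLp.toLp 2 (fun p => conj (a ⟨i, h⟩ p)) else 0 with hv
  set s : Set (Fin (n+2)) := {i | (i : ℕ) < n + 1} with hs
  have key : ∀ (k : Fin (n+1)) (x : EuclideanSpace ℂ (Fin (n+2))),
      (inner ℂ x (v (Fin.castSucc k)) : ℂ) = ∑ p : Fin (n+2), conj (x p) * conj (a k p) := by
    intro k x
    have hk : ((Fin.castSucc k : Fin (n+2)) : ℕ) < n + 1 := by simp; omega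
    rw [hv]
    simp only [dif_pos hk]
    rw [PiLp.inner_apply]
    apply Finset.sum_congr rfl
    intro p _
    rw [RCLike.inner_apply]
    rw [mul_comm]; rfl
  have hON : Orthonormal ℂ (s.restrict v) := by
    rw [orthonormal_iff_ite]
    rintro ⟨i, hi⟩ ⟨j, hj⟩
    have hi' : (i:ℕ) < n+1 := hi
    have hj' : (j:ℕ) < n+1 := hj
    simp only [Set.restrict_apply, hv, dif_pos hi', dif_pos hj']
    have heq : (inner ℂ (WithLp.toLp 2 (fun p => conj (a ⟨i, hi'⟩ p)) : EuclideanSpace ℂ (Fin (n+2)))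
        (WithLp.toLp 2 (fun p => conj (a ⟨j, hj'⟩ p)) : EuclideanSpace ℂ (Fin (n+2))) : ℂ)
        = ∑ p : Fin (n+2), a ⟨i, hi'⟩ p * conj (a ⟨j, hj'⟩ p) := by
      rw [PiLp.inner_apply]
      apply Finset.sum_congr rfl
      intro p _
      rw [RCLike.inner_apply]
      simp only [starRingEnd_apply, star_star]
      ring
    change inner ℂ (v i) (v j) = _
    simp only [hv, dif_pos hi', dif_pos hj'] at heq ⊢
    rw [heq, hcol]
    by_cases hij : i = j
    · subst hij; simp
    · rw [if_neg (by simp [Fin.ext_iff]; exact fun h => hij (Fin.ext h)),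
        if_neg (by simp [Subtype.ext_iff]; exact hij)]
  obtain ⟨b, hb⟩ := hON.exists_orthonormalBasis_extension_of_card_eq
    (by simp [finrank_euclideanSpace_fin])
  set W : ℂ → EuclideanSpace ℂ (Fin (n+2)) := fun t => WithLp.toLp 2 (fun p : Fin (n+2) => eval t (φ p)) with hW
  set ψ : EuclideanSpace ℂ (Fin (n+2)) := b (Fin.last (n+1)) with hψ
  refine ⟨fun t => (inner ℂ ψ (W t) : ℂ), ?_⟩
  intro t u
  have hcomp := b.sum_inner_mul_inner (W t) (W u)
  rw [Fin.sum_univ_castSucc] at hcomp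
  have hbc : ∀ m : Fin (n+1), b (Fin.castSucc m) = v (Fin.castSucc m) := by
    intro m
    apply hb
    show ((Fin.castSucc m : Fin (n+2)) : ℕ) < n + 1
    simp; omega
  have hWv : ∀ (m : Fin (n+1)) (x : ℂ),
      (inner ℂ (W x) (v (Fin.castSucc m)) : ℂ) = conj (x * eval x (φ m)) := by
    intro m x
    rw [key]
    have hx : eval x ((X:ℂ[X]) * φ m) = ∑ p : Fin (n+2), a m p * eval x (φ p) := by
      rw [ha m, Polynomial.eval_finset_sum]
      simp [Polynomial.eval_smul, smul_eq_mul]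
    have : x * eval x (φ (m:ℕ)) = ∑ p : Fin (n+2), a m p * eval x (φ p) := by
      rw [← hx]; simp
    rw [this, map_sum]
    apply Finset.sum_congr rfl
    intro p _
    rw [hW]
    simp only [map_mul]
    ring
  have hsum1 : ∀ m : Fin (n+1),
      (inner ℂ (W t) (b (Fin.castSucc m)) : ℂ) * (inner ℂ (b (Fin.castSucc m)) (W u) : ℂ)
      = (conj t * u) * (conj (eval t (φ m)) * eval u (φ m)) := by
    intro m
    rw [hbc m]
    rw [hWv m t]
    rw [← inner_conj_symm, hWv m u]
    simp only [map_mul, starRingEnd_apply, star_star]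
    ring
  rw [Finset.sum_congr rfl (fun m _ => hsum1 m)] at hcomp
  have hWW : (inner ℂ (W t) (W u) : ℂ) = ∑ p : Fin (n+2), conj (eval t (φ p)) * eval u (φ p) := by
    rw [PiLp.inner_apply]
    apply Finset.sum_congr rfl
    intro p _
    rw [RCLike.inner_apply]
    rw [mul_comm]
  rw [hWW] at hcomp
  have hKn : christoffelK φ n t u = ∑ m : Fin (n+1), conj (eval t (φ m)) * eval u (φ m) := by
    rw [christoffelK, Finset.sum_range]
  have hKn1 : (∑ p : Fin (n+2), conj (eval t (φ p)) * eval u (φ p))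
      = christoffelK φ n t u + conj (eval t (φ (n+1))) * eval u (φ (n+1)) := by
    rw [christoffelK, Finset.sum_range, Fin.sum_univ_castSucc]
    congr 1
  rw [hKn1, ← Finset.mul_sum, ← hKn, ← hψ] at hcomp
  have hψt : (inner ℂ (W t) ψ : ℂ) = conj ((inner ℂ ψ (W t) : ℂ)) := by
    rw [inner_conj_symm]
  rw [hψt] at hcomp
  linear_combination -hcomp


/-- The total mass of the discrete measure `μ_n = ∑_j (1/K_n(ζ_{jn},ζ_{jn})) δ_{ζ_{jn}}`
equals the total mass of `μ`; equivalently `∑_{j=0}^n 1/K_n(ζ_{jn},ζ_{jn}) = μ(T)`. -/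
theorem nodeMeasure_total_mass
    (μ : Measure ℂ) [IsFiniteMeasure μ]
    (hμT : μ (Metric.sphere (0 : ℂ) 1)ᶜ = 0)
    (hμinf : ∀ s : Finset ℂ, μ ((s : Set ℂ)ᶜ) ≠ 0)
    (φ : ℕ → Polynomial ℂ)
    (hdeg : ∀ k, (φ k).degree = (k : ℕ))
    (hlead : ∀ k, 0 < ((φ k).leadingCoeff).re ∧ ((φ k).leadingCoeff).im = 0)
    (horth : ∀ k m, ∫ z, (φ k).eval z * conj ((φ m).eval z) ∂μ
        = if k = m then 1 else 0)
    (n : ℕ) (w : ℂ) (hw : w ∈ Metric.sphere (0 : ℂ) 1)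
    (ζ : Fin (n + 1) → ℂ)
    (hζT : ∀ j, ζ j ∈ Metric.sphere (0 : ℂ) 1)
    (hζinj : Function.Injective ζ)
    (hζ0 : ∀ j, paraOrtho φ n w (ζ j) = 0) :
    nodeMeasure φ n ζ Set.univ = μ Set.univ ∧
    ∑ j : Fin (n + 1), ((christoffelK φ n (ζ j) (ζ j)).re)⁻¹ = (μ Set.univ).toReal := by
  classical
  -- basic integration facts
  have hres : μ.restrict (Metric.sphere (0:ℂ) 1) = μ :=
    Measure.restrict_eq_self_of_ae_mem (by rw [MeasureTheory.ae_iff]; exact hμT)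
  have intg : ∀ p q : ℂ[X], Integrable (fun z => eval z p * conj (eval z q)) μ := by
    intro p q
    rw [← hres]
    exact (((p.continuous_aeval).mul
      (Complex.continuous_conj.comp q.continuous_aeval)).continuousOn).integrableOn_compact
      (isCompact_sphere 0 1)
  have hae : ∀ᵐ z ∂μ, z * conj z = 1 := by
    rw [MeasureTheory.ae_iff]
    refine measure_mono_null (fun z hz => ?_) hμT
    simp only [Set.mem_setOf_eq] at hz
    intro hmem
    apply hz
    rw [Complex.mul_conj]
    norm_cast
    rw [Complex.normSq_eq_norm_sq]
    simp only [mem_sphere_iff_norm, sub_zero] at hmem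
    rw [hmem]; norm_num
  have hcircle : ∀ u : ℂ, u ∈ Metric.sphere (0:ℂ) 1 → conj u * u = 1 := by
    intro u hu
    rw [mul_comm, Complex.mul_conj]
    norm_cast
    rw [Complex.normSq_eq_norm_sq]
    simp only [mem_sphere_iff_norm, sub_zero] at hu
    rw [hu]; norm_num
  -- expansion of X * φ m
  have hexp : ∀ m : Fin (n+1), ∃ b : Fin (n+2) → ℂ,
      (X : ℂ[X]) * φ (m:ℕ) = ∑ p : Fin (n+2), (b p) • φ (p:ℕ) := by
    intro m
    apply span_phi φ hdeg (n+2)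
    have h1 : ((X : ℂ[X]) * φ (m:ℕ)).degree = (((m:ℕ)+1 : ℕ) : WithBot ℕ) := by
      rw [degree_mul, degree_X, hdeg]
      push_cast
      ring
    rw [h1]
    exact_mod_cast (by omega : (m:ℕ)+1 < n+2)
  choose a ha using hexp
  -- column orthonormality
  have hcol : ∀ k m : Fin (n+1),
      ∑ p : Fin (n+2), a k p * conj (a m p) = if k = m then 1 else 0 := by
    intro k m
    have I1 : (∫ z, eval z ((X:ℂ[X]) * φ (k:ℕ)) * conj (eval z ((X:ℂ[X]) * φ (m:ℕ))) ∂μ)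
        = if k = m then 1 else 0 := by
      have heq : (∫ z, eval z ((X:ℂ[X]) * φ (k:ℕ)) * conj (eval z ((X:ℂ[X]) * φ (m:ℕ))) ∂μ)
          = ∫ z, (φ (k:ℕ)).eval z * conj ((φ (m:ℕ)).eval z) ∂μ := by
        apply integral_congr_ae
        filter_upwards [hae] with z hz
        simp only [eval_mul, eval_X, map_mul]
        calc z * eval z (φ (k:ℕ)) * ((starRingEnd ℂ) z * (starRingEnd ℂ) (eval z (φ (m:ℕ))))
            = (z * (starRingEnd ℂ) z) * (eval z (φ (k:ℕ)) * (starRingEnd ℂ) (eval z (φ (m:ℕ)))) := by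
              ring
          _ = eval z (φ (k:ℕ)) * (starRingEnd ℂ) (eval z (φ (m:ℕ))) := by rw [hz]; ring
      rw [heq, horth]
      simp [Fin.val_eq_val]
    have I2 : (∫ z, eval z ((X:ℂ[X]) * φ (k:ℕ)) * conj (eval z ((X:ℂ[X]) * φ (m:ℕ))) ∂μ)
        = ∑ p : Fin (n+2), a k p * conj (a m p) := by
      have hint : (fun z => eval z ((X:ℂ[X]) * φ (k:ℕ)) * conj (eval z ((X:ℂ[X]) * φ (m:ℕ))))
          = fun z => ∑ p : Fin (n+2), ∑ q : Fin (n+2),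
              (a k p * conj (a m q)) * (eval z (φ (p:ℕ)) * conj (eval z (φ (q:ℕ)))) := by
        funext z
        rw [ha k, ha m, Polynomial.eval_finset_sum, Polynomial.eval_finset_sum]
        simp only [Polynomial.eval_smul, smul_eq_mul, map_sum, map_mul]
        rw [Finset.sum_mul_sum]
        exact Finset.sum_congr rfl fun p _ => Finset.sum_congr rfl fun q _ => by ring
      rw [hint]
      rw [integral_finset_sum]
      · have hinner : ∀ p : Fin (n+2), (∫ z, ∑ q : Fin (n+2),
            (a k p * conj (a m q)) * (eval z (φ (p:ℕ)) * conj (eval z (φ (q:ℕ)))) ∂μ)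
            = a k p * conj (a m p) := by
          intro p
          rw [integral_finset_sum]
          · have hq : ∀ q : Fin (n+2), (∫ z,
                (a k p * conj (a m q)) * (eval z (φ (p:ℕ)) * conj (eval z (φ (q:ℕ)))) ∂μ)
                = (a k p * conj (a m q)) * (if (p:ℕ) = (q:ℕ) then 1 else 0) := by
              intro q
              rw [MeasureTheory.integral_const_mul, horth]
            rw [Finset.sum_congr rfl fun q _ => hq q]
            simp [Fin.val_eq_val]
          · intro q _
            exact ((intg (φ (p:ℕ)) (φ (q:ℕ))).const_mul _)
        rw [Finset.sum_congr rfl fun p _ => hinner p]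
      · intro p _
        apply integrable_finset_sum
        intro q _
        exact ((intg (φ (p:ℕ)) (φ (q:ℕ))).const_mul _)
    rw [← I2, I1]
  obtain ⟨g, hCD⟩ := cd_formula φ n a ha hcol
  set A : ℂ → ℂ := fun t => eval t (φ (n+1)) with hA
  -- φ 0 is a nonzero constant
  have hc0 : φ 0 = C ((φ 0).coeff 0) :=
    Polynomial.eq_C_of_degree_le_zero (by rw [hdeg 0]; exact le_refl _)
  set c : ℂ := (φ 0).coeff 0 with hcdef
  have hcne : c ≠ 0 := by
    have h1 := (hlead 0).1
    rw [hc0, Polynomial.leadingCoeff_C] at h1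
    intro h
    rw [h] at h1
    simp at h1
  -- diagonal kernel values
  have hKdiag : ∀ u : ℂ, christoffelK φ n u u
      = ((∑ j ∈ Finset.range (n+1), Complex.normSq (eval u (φ j)) : ℝ) : ℂ) := by
    intro u
    rw [christoffelK, Complex.ofReal_sum]
    apply Finset.sum_congr rfl
    intro j _
    rw [Complex.normSq_eq_conj_mul_self]
  have hkpos : ∀ u : ℂ, 0 < (christoffelK φ n u u).re := by
    intro u
    rw [hKdiag u, Complex.ofReal_re]
    have h1 : 0 < Complex.normSq (eval u (φ 0)) := by
      rw [hc0]
      simp only [Polynomial.eval_C]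
      exact Complex.normSq_pos.mpr hcne
    calc (0:ℝ) < Complex.normSq (eval u (φ 0)) := h1
      _ ≤ ∑ j ∈ Finset.range (n+1), Complex.normSq (eval u (φ j)) :=
        Finset.single_le_sum (f := fun j => Complex.normSq (eval u (φ j)))
          (fun j _ => Complex.normSq_nonneg _) (Finset.mem_range.mpr (Nat.succ_pos n))
  -- diagonal CD on circle
  have hEu : ∀ u : ℂ, u ∈ Metric.sphere (0:ℂ) 1 → conj (g u) * g u = conj (A u) * A u := by
    intro u hu
    have h := hCD u u
    rw [hcircle u hu] at h
    rw [hA]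
    simp only []
    linear_combination -h
  -- A w ≠ 0
  have hAw : A w ≠ 0 := by
    intro h0
    have hgw : g w = 0 := by
      have h := hEu w hw
      rw [h0, mul_zero] at h
      have : Complex.normSq (g w) = 0 := by
        have := h
        rw [← Complex.normSq_eq_conj_mul_self] at this
        exact_mod_cast this
      exact Complex.normSq_eq_zero.mp this
    have hall : ∀ u : ℂ, (1 - conj w * u) * christoffelK φ n w u = 0 := by
      intro u
      rw [hCD w u, hgw]
      rw [hA] at h0
      simp only [] at h0
      rw [h0]
      simp
    set Q : ℂ[X] := (1 - C (conj w) * X) *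
      ∑ j ∈ Finset.range (n+1), C (conj (eval w (φ j))) * φ j with hQdef
    have hevalQ : ∀ u : ℂ, eval u Q = 0 := by
      intro u
      rw [hQdef]
      have : eval u ((1 - C (conj w) * X : ℂ[X]) *
          ∑ j ∈ Finset.range (n+1), C (conj (eval w (φ j))) * φ j)
          = (1 - conj w * u) * christoffelK φ n w u := by
        rw [Polynomial.eval_mul, Polynomial.eval_finset_sum]
        congr 1
        · simp
        · rw [christoffelK]
          apply Finset.sum_congr rfl
          intro j _
          simp
      rw [this, hall]
    have hQ0 : Q = 0 := Polynomial.funext (by simpa using hevalQ)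
    have hfac : (1 - C (conj w) * X : ℂ[X]) ≠ 0 := by
      intro h
      have := congrArg (eval 0) h
      simp at this
    have hsum0 : (∑ j ∈ Finset.range (n+1), C (conj (eval w (φ j))) * φ j : ℂ[X]) = 0 := by
      rcases mul_eq_zero.mp hQ0 with h | h
      · exact absurd h hfac
      · exact h
    have hKww : christoffelK φ n w w = 0 := by
      have h := congrArg (eval w) hsum0
      rw [Polynomial.eval_finset_sum] at h
      rw [christoffelK]
      simpa using h
    have := hkpos w
    rw [hKww] at this
    simp at this
  have hgwne : g w ≠ 0 := by
    intro h0
    apply hAw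
    have h := hEu w hw
    rw [h0, mul_zero] at h
    have : Complex.normSq (A w) = 0 := by
      rw [← Complex.normSq_eq_conj_mul_self] at h
      exact_mod_cast h.symm
    exact Complex.normSq_eq_zero.mp this
  -- relation at roots
  have hrel : ∀ j, conj (g w) * g (ζ j) = conj (A w) * A (ζ j) := by
    intro j
    have h := hζ0 j
    rw [paraOrtho] at h
    have h2 := hCD w (ζ j)
    rw [h] at h2
    rw [hA]
    simp only []
    linear_combination -h2
  -- orthogonality of kernels at distinct nodes
  have Korth : ∀ j k : Fin (n+1), j ≠ k → christoffelK φ n (ζ j) (ζ k) = 0 := by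
    intro j k hjk
    have cj : g w * conj (g (ζ j)) = A w * conj (A (ζ j)) := by
      have := congrArg conj (hrel j)
      simpa only [map_mul, Complex.conj_conj] using this
    have hww := hEu w hw
    have e1 : conj (g (ζ j)) * g (ζ k) * (conj (g w) * g w)
        = conj (A (ζ j)) * A (ζ k) * (conj (g w) * g w) := by
      calc conj (g (ζ j)) * g (ζ k) * (conj (g w) * g w)
          = (g w * conj (g (ζ j))) * (conj (g w) * g (ζ k)) := by ring
        _ = (A w * conj (A (ζ j))) * (conj (A w) * A (ζ k)) := by rw [cj, hrel k]
        _ = conj (A (ζ j)) * A (ζ k) * (conj (A w) * A w) := by ring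
        _ = conj (A (ζ j)) * A (ζ k) * (conj (g w) * g w) := by rw [← hww]
    have hne : conj (g w) * g w ≠ 0 :=
      mul_ne_zero (by simpa using hgwne) hgwne
    have h1 : conj (g (ζ j)) * g (ζ k) = conj (A (ζ j)) * A (ζ k) :=
      mul_right_cancel₀ hne e1
    have h2 := hCD (ζ j) (ζ k)
    simp only [hA] at h1
    rw [h1] at h2
    have h3 : (1 - conj (ζ j) * ζ k) * christoffelK φ n (ζ j) (ζ k) = 0 := by
      rw [h2]; ring
    have h4 : (1 - conj (ζ j) * ζ k) ≠ 0 := by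
      intro h
      apply hjk
      apply hζinj
      have hj1 : conj (ζ j) * ζ j = 1 := hcircle _ (hζT j)
      have hcne' : conj (ζ j) ≠ 0 := by
        intro hc
        rw [hc, zero_mul] at hj1
        exact one_ne_zero hj1.symm
      have h' : conj (ζ j) * ζ k = 1 := by linear_combination -h
      exact mul_left_cancel₀ hcne' (by rw [hj1, h'])
    exact (mul_eq_zero.mp h3).resolve_left h4
  -- abbreviations
  have hκpos : ∀ j : Fin (n+1), 0 < (christoffelK φ n (ζ j) (ζ j)).re := fun j => hkpos (ζ j)
  have hKval : ∀ j : Fin (n+1), christoffelK φ n (ζ j) (ζ j)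
      = (((christoffelK φ n (ζ j) (ζ j)).re : ℝ) : ℂ) := by
    intro j
    rw [hKdiag (ζ j)]
    simp
  -- the unitary matrix of normalized node vectors
  set M : Matrix (Fin (n+1)) (Fin (n+1)) ℂ := fun j m =>
    (((Real.sqrt ((christoffelK φ n (ζ j) (ζ j)).re))⁻¹ : ℝ) : ℂ)
      * conj (eval (ζ j) (φ (m:ℕ))) with hM
  have hsqr : ∀ j : Fin (n+1),
      (Real.sqrt ((christoffelK φ n (ζ j) (ζ j)).re))⁻¹
        * (Real.sqrt ((christoffelK φ n (ζ j) (ζ j)).re))⁻¹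
      = ((christoffelK φ n (ζ j) (ζ j)).re)⁻¹ := by
    intro j
    rw [← mul_inv, Real.mul_self_sqrt (hκpos j).le]
  have hMM : M * M.conjTranspose = 1 := by
    ext j l
    rw [Matrix.mul_apply]
    have hterm : ∀ m : Fin (n+1), M j m * M.conjTranspose m l
        = ((((Real.sqrt ((christoffelK φ n (ζ j) (ζ j)).re))⁻¹
            * (Real.sqrt ((christoffelK φ n (ζ l) (ζ l)).re))⁻¹ : ℝ)) : ℂ)
          * (conj (eval (ζ j) (φ (m:ℕ))) * eval (ζ l) (φ (m:ℕ))) := by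
      intro m
      rw [Matrix.conjTranspose_apply]
      simp only [hM]
      simp only [← starRingEnd_apply, map_mul, Complex.conj_conj, Complex.conj_ofReal]
      push_cast
      ring
    rw [Finset.sum_congr rfl (fun m _ => hterm m), ← Finset.mul_sum]
    have hsumK : (∑ m : Fin (n+1), conj (eval (ζ j) (φ (m:ℕ))) * eval (ζ l) (φ (m:ℕ)))
        = christoffelK φ n (ζ j) (ζ l) := by
      rw [christoffelK, Finset.sum_range]
    rw [hsumK]
    by_cases hjl : j = l
    · subst hjl
      rw [Matrix.one_apply_eq]
      obtain ⟨r, hrpos, hr⟩ : ∃ r : ℝ, 0 < r ∧ christoffelK φ n (ζ j) (ζ j) = (r:ℂ) :=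
        ⟨_, hκpos j, hKval j⟩
      rw [hr]
      simp only [Complex.ofReal_re]
      rw [← mul_inv, Real.mul_self_sqrt hrpos.le, ← Complex.ofReal_mul,
        inv_mul_cancel₀ hrpos.ne']
      simp
    · rw [Korth j l hjl, mul_zero, Matrix.one_apply_ne hjl]
  have hMM' : M.conjTranspose * M = 1 := mul_eq_one_comm.mp hMM
  have h00 : (M.conjTranspose * M) 0 0 = 1 := by rw [hMM']; simp
  rw [Matrix.mul_apply] at h00
  have hterm0 : ∀ j : Fin (n+1), M.conjTranspose 0 j * M j 0
      = ((Complex.normSq c * ((christoffelK φ n (ζ j) (ζ j)).re)⁻¹ : ℝ) : ℂ) := by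
    intro j
    obtain ⟨r, hrpos, hr⟩ : ∃ r : ℝ, 0 < r ∧ christoffelK φ n (ζ j) (ζ j) = (r:ℂ) :=
      ⟨_, hκpos j, hKval j⟩
    have hre : (christoffelK φ n (ζ j) (ζ j)).re = r := by rw [hr, Complex.ofReal_re]
    have hev : eval (ζ j) (φ ((0 : Fin (n+1)) : ℕ)) = c := by
      rw [show ((0 : Fin (n+1)) : ℕ) = 0 from rfl, hc0, Polynomial.eval_C]
    rw [Matrix.conjTranspose_apply]
    simp only [hM, hre, hev]
    simp only [← starRingEnd_apply, map_mul, Complex.conj_conj, Complex.conj_ofReal]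
    have hgoal : ((((Real.sqrt r)⁻¹ : ℝ)) : ℂ) * c * (((((Real.sqrt r)⁻¹ : ℝ)) : ℂ) * conj c)
        = ((Complex.normSq c * r⁻¹ : ℝ) : ℂ) := by
      calc ((((Real.sqrt r)⁻¹ : ℝ)) : ℂ) * c * (((((Real.sqrt r)⁻¹ : ℝ)) : ℂ) * conj c)
          = ((((Real.sqrt r)⁻¹ * (Real.sqrt r)⁻¹ : ℝ)) : ℂ) * (c * conj c) := by
            push_cast; ring
        _ = ((r⁻¹ : ℝ) : ℂ) * ((Complex.normSq c : ℝ) : ℂ) := by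
            rw [← mul_inv, Real.mul_self_sqrt hrpos.le, Complex.mul_conj]
        _ = ((Complex.normSq c * r⁻¹ : ℝ) : ℂ) := by push_cast; ring
    convert hgoal using 2 <;> push_cast <;> ring
  rw [Finset.sum_congr rfl (fun j _ => hterm0 j), ← Complex.ofReal_sum] at h00
  have hreal : ∑ j : Fin (n+1), Complex.normSq c * ((christoffelK φ n (ζ j) (ζ j)).re)⁻¹ = 1 := by
    exact_mod_cast h00
  -- total mass of μ
  have hμ1 : (μ Set.univ).toReal * Complex.normSq c = 1 := by
    have h := horth 0 0
    rw [if_pos rfl] at h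
    have hconst : (fun z => (φ 0).eval z * conj ((φ 0).eval z))
        = fun _ : ℂ => ((Complex.normSq c : ℝ) : ℂ) := by
      funext z
      rw [hc0]
      simp only [Polynomial.eval_C]
      rw [Complex.mul_conj]
    rw [hconst, MeasureTheory.integral_const, Complex.real_smul, ← Complex.ofReal_mul] at h
    exact_mod_cast h
  have hnsne : Complex.normSq c ≠ 0 := (Complex.normSq_pos.mpr hcne).ne'
  have htot : (μ Set.univ).toReal = (Complex.normSq c)⁻¹ :=
    eq_inv_of_mul_eq_one_right (by rw [mul_comm]; exact hμ1)
  have hsum : ∑ j : Fin (n + 1), ((christoffelK φ n (ζ j) (ζ j)).re)⁻¹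
      = (μ Set.univ).toReal := by
    rw [htot]
    have hstep : ∑ j : Fin (n + 1), ((christoffelK φ n (ζ j) (ζ j)).re)⁻¹
        = (Complex.normSq c)⁻¹
          * ∑ j : Fin (n+1), Complex.normSq c * ((christoffelK φ n (ζ j) (ζ j)).re)⁻¹ := by
      rw [Finset.mul_sum]
      apply Finset.sum_congr rfl
      intro j _
      field_simp
    rw [hstep, hreal, mul_one]
  refine ⟨?_, hsum⟩
  rw [nodeMeasure]
  have happly : (∑ j : Fin (n + 1),
      ENNReal.ofReal (((christoffelK φ n (ζ j) (ζ j)).re)⁻¹) • Measure.dirac (ζ j))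
        (Set.univ : Set ℂ)
      = ∑ j : Fin (n + 1),
        (ENNReal.ofReal (((christoffelK φ n (ζ j) (ζ j)).re)⁻¹) • Measure.dirac (ζ j))
          (Set.univ : Set ℂ) := by
    rw [Measure.finset_sum_apply]
  rw [happly]
  calc (∑ j : Fin (n + 1),
      (ENNReal.ofReal (((christoffelK φ n (ζ j) (ζ j)).re)⁻¹) • Measure.dirac (ζ j))
        (Set.univ : Set ℂ))
      = ∑ j : Fin (n + 1), ENNReal.ofReal (((christoffelK φ n (ζ j) (ζ j)).re)⁻¹) := by
        apply Finset.sum_congr rfl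
        intro j _
        rw [Measure.smul_apply]
        simp
    _ = ENNReal.ofReal (∑ j : Fin (n + 1), ((christoffelK φ n (ζ j) (ζ j)).re)⁻¹) :=
        (ENNReal.ofReal_sum_of_nonneg (fun j _ => inv_nonneg.mpr (hκpos j).le)).symm
    _ = ENNReal.ofReal ((μ Set.univ).toReal) := by rw [hsum]
    _ = μ Set.univ := ENNReal.ofReal_toReal (measure_ne_top μ _)
end

section
/- Let μ be a finite positive Borel measure on the unit circle T with infinite support, K_n its Christoffel kernel, w ∈ T, and ζ_{0n}, …, ζ_{nn} ∈ T the zeros of B_{n+1}(w,·). The fundamental polynomials ℓ_{jn}(z) := K_n(z, ζ_{jn}) / K_n(ζ_{jn}, ζ_{jn}) satisfy Σ_{j=0}^n ∫_T |ℓ_{jn}|² dμ = μ(T). -/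
open MeasureTheory Polynomial Filter
open scoped ComplexConjugate Topology

/-- The `j`-th fundamental (Lagrange) polynomial for the nodes `ζ`:
`ℓ_{jn}(z) = K_n(z, ζ_{jn}) / K_n(ζ_{jn}, ζ_{jn})`.  Note that by Hermitian symmetry of the
kernel, `K_n(z, ζ) = conj (K_n(ζ, z))`; as a *polynomial* in `z` (of degree `n`, as in the
paper) the fundamental polynomial is `z ↦ K_n(ζ_{jn}, z) / K_n(ζ_{jn}, ζ_{jn})`, with
`K_n(ζ_{jn}, ζ_{jn}) = ∑_k |φ_k(ζ_{jn})|²` a positive real number. -/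
noncomputable def ellFun (φ : ℕ → Polynomial ℂ) (n : ℕ) (ζ : Fin (n + 1) → ℂ)
    (j : Fin (n + 1)) (z : ℂ) : ℂ :=
  christoffelK φ n (ζ j) z / christoffelK φ n (ζ j) (ζ j)

namespace SumSqAux

/-- Continuous functions are integrable w.r.t. a finite measure supported on the sphere. -/
lemma integrable_cont (μ : Measure ℂ) [IsFiniteMeasure μ]
    (hμT : μ (Metric.sphere (0 : ℂ) 1)ᶜ = 0)
    {E : Type*} [NormedAddCommGroup E] {f : ℂ → E} (hf : Continuous f) :
    Integrable f μ := by
  obtain ⟨C, hC⟩ := (isCompact_sphere (0:ℂ) 1).exists_bound_of_continuousOn hf.continuousOn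
  refine Integrable.mono' (integrable_const C) hf.aestronglyMeasurable ?_
  have hae : ∀ᵐ z ∂μ, z ∈ Metric.sphere (0:ℂ) 1 := by
    rw [ae_iff]
    convert hμT using 2
    rfl
  filter_upwards [hae] with z hz using hC z hz

lemma span_poly (φ : ℕ → Polynomial ℂ) (hdeg : ∀ k, (φ k).degree = (k : ℕ))
    (hne : ∀ k, (φ k).leadingCoeff ≠ 0) :
    ∀ (N : ℕ) (s : Polynomial ℂ), s.degree < (N : WithBot ℕ) →
      s ∈ Submodule.span ℂ (φ '' Set.Iio N) := by
  intro N
  induction N with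
  | zero =>
    intro s hs
    have : s = 0 := by
      by_contra h
      exact absurd (Polynomial.zero_le_degree_iff.2 h) (not_le.2 (by exact_mod_cast hs))
    simp [this]
  | succ N ih =>
    intro s hs
    by_cases hd : s.degree < (N : WithBot ℕ)
    · exact Submodule.span_mono (Set.image_mono (Set.Iio_subset_Iio (Nat.le_succ N))) (ih s hd)
    · have hs0 : s ≠ 0 := by
        rintro rfl
        exact hd (by rw [Polynomial.degree_zero]; exact WithBot.bot_lt_coe N)
      have hsd : s.degree = (N : WithBot ℕ) := by
        have h1 : s.degree ≤ (N : WithBot ℕ) := by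
          rw [Polynomial.degree_eq_natDegree hs0] at hs ⊢
          exact_mod_cast Nat.lt_succ_iff.mp (by exact_mod_cast hs)
        exact le_antisymm h1 (not_lt.mp hd)
      set c := s.leadingCoeff / (φ N).leadingCoeff with hc
      have hcne : c ≠ 0 := div_ne_zero (Polynomial.leadingCoeff_ne_zero.2 hs0) (hne N)
      have hdegC : (Polynomial.C c * φ N).degree = s.degree := by
        rw [Polynomial.degree_C_mul hcne, hdeg N, hsd]
      have hlcC : (Polynomial.C c * φ N).leadingCoeff = s.leadingCoeff := by
        rw [Polynomial.leadingCoeff_mul, Polynomial.leadingCoeff_C, hc,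
          div_mul_cancel₀ _ (hne N)]
      have hlt : (s - Polynomial.C c * φ N).degree < (N : WithBot ℕ) := by
        rw [← hsd]
        exact Polynomial.degree_sub_lt hdegC.symm hs0 hlcC.symm
      have hmem : s - Polynomial.C c * φ N ∈ Submodule.span ℂ (φ '' Set.Iio (N+1)) :=
        Submodule.span_mono (Set.image_mono (Set.Iio_subset_Iio (Nat.le_succ N))) (ih _ hlt)
      have hφN : φ N ∈ Submodule.span ℂ (φ '' Set.Iio (N+1)) :=
        Submodule.subset_span ⟨N, by simp, rfl⟩
      have : s = (s - Polynomial.C c * φ N) + c • φ N := by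
        rw [Polynomial.smul_eq_C_mul]; ring
    

      rw [this]
      exact Submodule.add_mem _ hmem (Submodule.smul_mem _ _ hφN)

/-- The kernel as a polynomial in the second variable. -/
noncomputable def Kpoly (φ : ℕ → Polynomial ℂ) (n : ℕ) (a : ℂ) : Polynomial ℂ :=
  ∑ j ∈ Finset.range (n + 1), Polynomial.C (conj ((φ j).eval a)) * φ j

lemma Kpoly_eval (φ : ℕ → Polynomial ℂ) (n : ℕ) (a z : ℂ) :
    (Kpoly φ n a).eval z = christoffelK φ n a z := by
  simp [Kpoly, christoffelK, Polynomial.eval_finset_sum]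

lemma Kpoly_degree (φ : ℕ → Polynomial ℂ) (hdeg : ∀ k, (φ k).degree = (k : ℕ)) (n : ℕ) (a : ℂ) :
    (Kpoly φ n a).degree < ((n+1 : ℕ) : WithBot ℕ) := by
  refine lt_of_le_of_lt (Polynomial.degree_sum_le _ _) ?_
  rw [Finset.sup_lt_iff (by exact_mod_cast WithBot.bot_lt_coe (n+1))]
  intro j hj
  refine lt_of_le_of_lt (Polynomial.degree_mul_le _ _) ?_
  calc (Polynomial.C (conj ((φ j).eval a))).degree + (φ j).degree
      ≤ 0 + (j : WithBot ℕ) := add_le_add Polynomial.degree_C_le (le_of_eq (hdeg j))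
    _ = (j : WithBot ℕ) := by rw [zero_add]
    _ < ((n+1 : ℕ) : WithBot ℕ) := by
        exact_mod_cast Nat.lt_succ_of_le (Finset.mem_range_succ_iff.mp hj)


lemma repro (μ : Measure ℂ) [IsFiniteMeasure μ]
    (hμT : μ (Metric.sphere (0 : ℂ) 1)ᶜ = 0)
    (φ : ℕ → Polynomial ℂ) (hdeg : ∀ k, (φ k).degree = (k : ℕ))
    (hne : ∀ k, (φ k).leadingCoeff ≠ 0)
    (horth : ∀ k m, ∫ z, (φ k).eval z * conj ((φ m).eval z) ∂μ = if k = m then 1 else 0)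
    (n : ℕ) (a : ℂ) (s : Polynomial ℂ) (hs : s.degree < ((n+1 : ℕ) : WithBot ℕ)) :
    ∫ z, christoffelK φ n a z * conj (s.eval z) ∂μ = conj (s.eval a) := by
  obtain ⟨c, hc⟩ : ∃ c : Fin (n+1) → ℂ, ∑ k, c k • φ (k : ℕ) = s := by
    have h1 := span_poly φ hdeg hne (n+1) s hs
    have h2 : φ '' Set.Iio (n+1) = Set.range (fun k : Fin (n+1) => φ (k : ℕ)) := by
      ext p
      constructor
      · rintro ⟨k, hk, rfl⟩; exact ⟨⟨k, hk⟩, rfl⟩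
      · rintro ⟨k, rfl⟩; exact ⟨(k : ℕ), k.isLt, rfl⟩
    rw [h2] at h1
    exact (Submodule.mem_span_range_iff_exists_fun ℂ).mp h1
  subst hc
  have hint : ∀ (b d : ℂ) (p q : Polynomial ℂ),
      Integrable (fun z => b * (d * (p.eval z * conj (q.eval z)))) μ := by
    intro b d p q
    apply integrable_cont μ hμT
    exact (continuous_const.mul (continuous_const.mul
      (p.continuous_aeval.mul (Complex.continuous_conj.comp q.continuous_aeval))))
  have hK : ∀ z, christoffelK φ n a z
      = ∑ m : Fin (n+1), conj ((φ (m : ℕ)).eval a) * (φ (m : ℕ)).eval z := by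
    intro z
    rw [christoffelK, ← Fin.sum_univ_eq_sum_range (fun m => conj ((φ m).eval a) * (φ m).eval z)]
  have heval : ∀ z : ℂ, conj ((∑ k : Fin (n+1), c k • φ (k : ℕ)).eval z)
      = ∑ k : Fin (n+1), conj (c k) * conj ((φ (k : ℕ)).eval z) := by
    intro z
    rw [Polynomial.eval_finset_sum, map_sum]
    exact Finset.sum_congr rfl fun k _ => by simp
  have key : ∫ z, christoffelK φ n a z * conj ((∑ k : Fin (n+1), c k • φ (k : ℕ)).eval z) ∂μ
      = ∑ m : Fin (n+1), ∑ k : Fin (n+1),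
          conj ((φ (m : ℕ)).eval a) * (conj (c k) * (if (m : ℕ) = (k : ℕ) then 1 else 0)) := by
    rw [show (fun z => christoffelK φ n a z * conj ((∑ k : Fin (n+1), c k • φ (k : ℕ)).eval z))
        = fun z => ∑ m : Fin (n+1), ∑ k : Fin (n+1),
            conj ((φ (m : ℕ)).eval a) * (conj (c k) * ((φ (m : ℕ)).eval z * conj ((φ (k:ℕ)).eval z))) from ?_]
    · rw [integral_finset_sum _ (fun m _ => integrable_finset_sum _ (fun k _ => hint _ _ _ _))]
      refine Finset.sum_congr rfl fun m _ => ?_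
      rw [integral_finset_sum _ (fun k _ => hint _ _ _ _)]
      refine Finset.sum_congr rfl fun k _ => ?_
      rw [integral_const_mul, integral_const_mul, horth]
    · funext z
      rw [heval z, hK z, Finset.sum_mul]
      refine Finset.sum_congr rfl fun m _ => ?_
      rw [Finset.mul_sum]
      refine Finset.sum_congr rfl fun k _ => ?_
      ring
  rw [key]
  have hdiag : ∀ m : Fin (n+1), ∑ k : Fin (n+1),
      conj ((φ (m : ℕ)).eval a) * (conj (c k) * (if (m : ℕ) = (k : ℕ) then 1 else 0))
      = conj (c m) * conj ((φ (m : ℕ)).eval a) := by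
    intro m
    rw [Finset.sum_eq_single m]
    · simp [mul_comm]
    · intro k _ hk
      have : ¬ ((m : ℕ) = (k : ℕ)) := fun h => hk (Fin.ext h.symm)
      simp [this]
    · simp
  rw [Finset.sum_congr rfl (fun m _ => hdiag m)]
  rw [Polynomial.eval_finset_sum, map_sum]
  exact Finset.sum_congr rfl fun k _ => by simp


lemma Kself (φ : ℕ → Polynomial ℂ) (hdeg : ∀ k, (φ k).degree = (k : ℕ))
    (hlead : ∀ k, 0 < ((φ k).leadingCoeff).re ∧ ((φ k).leadingCoeff).im = 0)
    (n : ℕ) (a : ℂ) :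
    christoffelK φ n a a ≠ 0 ∧ conj (christoffelK φ n a a) = christoffelK φ n a a := by
  have hre : christoffelK φ n a a
      = ((∑ j ∈ Finset.range (n+1), Complex.normSq ((φ j).eval a) : ℝ) : ℂ) := by
    rw [christoffelK]
    push_cast
    exact Finset.sum_congr rfl fun j _ => by
      rw [mul_comm, Complex.mul_conj]
  have hpos : 0 < ∑ j ∈ Finset.range (n+1), Complex.normSq ((φ j).eval a) := by
    refine Finset.sum_pos' (fun j _ => Complex.normSq_nonneg _) ⟨0, by simp, ?_⟩
    have h0 : φ 0 = Polynomial.C ((φ 0).coeff 0) :=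
      Polynomial.eq_C_of_degree_le_zero (le_of_eq (hdeg 0))
    have hl : (φ 0).leadingCoeff = (φ 0).coeff 0 := by
      rw [Polynomial.leadingCoeff, Polynomial.natDegree_eq_of_degree_eq_some (hdeg 0)]
    have hc0 : (φ 0).coeff 0 ≠ 0 := by
      intro h
      have := (hlead 0).1
      rw [hl, h] at this
      simp at this
    rw [h0]
    simpa using Complex.normSq_pos.2 hc0
  constructor
  · rw [hre]
    exact_mod_cast ne_of_gt (by exact_mod_cast hpos)
  · rw [hre, Complex.conj_ofReal]

lemma degree_lt_succ_iff (p : Polynomial ℂ) (m : ℕ) :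
    p.degree < ((m+1 : ℕ) : WithBot ℕ) ↔ p.degree ≤ (m : WithBot ℕ) := by
  by_cases h : p = 0
  · subst h
    rw [Polynomial.degree_zero]
    constructor
    · intro _; exact bot_le
    · intro _; exact WithBot.bot_lt_coe _
  · rw [Polynomial.degree_eq_natDegree h]
    exact_mod_cast Nat.lt_succ_iff

lemma kernel_offdiag (μ : Measure ℂ) [IsFiniteMeasure μ]
    (hμT : μ (Metric.sphere (0 : ℂ) 1)ᶜ = 0)
    (hμinf : ∀ s : Finset ℂ, μ ((s : Set ℂ)ᶜ) ≠ 0)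
    (φ : ℕ → Polynomial ℂ)
    (hdeg : ∀ k, (φ k).degree = (k : ℕ))
    (hlead : ∀ k, 0 < ((φ k).leadingCoeff).re ∧ ((φ k).leadingCoeff).im = 0)
    (horth : ∀ k m, ∫ z, (φ k).eval z * conj ((φ m).eval z) ∂μ = if k = m then 1 else 0)
    (n : ℕ) (w : ℂ) (hw : w ∈ Metric.sphere (0 : ℂ) 1)
    (ζ : Fin (n + 1) → ℂ)
    (hζT : ∀ j, ζ j ∈ Metric.sphere (0 : ℂ) 1)
    (hζinj : Function.Injective ζ)
    (hζ0 : ∀ j, paraOrtho φ n w (ζ j) = 0) :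
    ∀ i j : Fin (n+1), i ≠ j → christoffelK φ n (ζ j) (ζ i) = 0 := by
  classical
  have hne : ∀ k, (φ k).leadingCoeff ≠ 0 := by
    intro k h
    have := (hlead k).1
    rw [h] at this
    simp at this
  have hsph : ∀ {z : ℂ}, z ∈ Metric.sphere (0 : ℂ) 1 → z * conj z = 1 := by
    intro z hz
    rw [Complex.mul_conj, Complex.normSq_eq_norm_sq]
    rw [mem_sphere_iff_norm, sub_zero] at hz
    rw [show ‖z‖ = 1 from hz]
    norm_num
  set Bp : Polynomial ℂ := (1 - Polynomial.C (conj w) * Polynomial.X) * Kpoly φ n w with hBp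
  have hBeval : ∀ z, Bp.eval z = paraOrtho φ n w z := by
    intro z
    simp [hBp, paraOrtho, Kpoly_eval]
  have hKw : Kpoly φ n w ≠ 0 := by
    intro h
    have := Kpoly_eval φ n w w
    rw [h] at this
    exact (Kself φ hdeg hlead n w).1 (by simpa using this.symm)
  have hBne : Bp ≠ 0 := by
    refine mul_ne_zero ?_ hKw
    intro h
    have : (1 - Polynomial.C (conj w) * Polynomial.X).eval 0 = 0 := by rw [h]; simp
    simp at this
  have hBdeg : Bp.degree ≤ ((n+1 : ℕ) : WithBot ℕ) := by
    refine le_trans (Polynomial.degree_mul_le _ _) ?_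
    have h1 : (1 - Polynomial.C (conj w) * Polynomial.X).degree ≤ 1 := by
      refine le_trans (Polynomial.degree_sub_le _ _) (max_le ?_ ?_)
      · exact le_trans Polynomial.degree_one_le (by norm_num)
      · refine le_trans (Polynomial.degree_mul_le _ _) ?_
        calc (Polynomial.C (conj w)).degree + Polynomial.X.degree
            ≤ 0 + 1 := add_le_add Polynomial.degree_C_le (le_of_eq Polynomial.degree_X)
          _ = 1 := by norm_num
    have h2 : (Kpoly φ n w).degree ≤ (n : WithBot ℕ) :=
      (degree_lt_succ_iff _ n).mp (Kpoly_degree φ hdeg n w)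
    calc (1 - Polynomial.C (conj w) * Polynomial.X).degree + (Kpoly φ n w).degree
        ≤ 1 + (n : WithBot ℕ) := add_le_add h1 h2
      _ = ((n+1 : ℕ) : WithBot ℕ) := by push_cast; ring
  -- the multiset of nodes is contained in the roots of Bp
  set M : Multiset ℂ := (Finset.univ : Finset (Fin (n+1))).val.map ζ with hM
  have hMnodup : M.Nodup := Multiset.Nodup.map hζinj (Finset.univ : Finset (Fin (n+1))).nodup
  have hMle : M ≤ Bp.roots := by
    rw [Multiset.le_iff_subset hMnodup]
    intro a ha
    rw [hM, Multiset.mem_map] at ha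
    obtain ⟨i, _, rfl⟩ := ha
    rw [Polynomial.mem_roots hBne]
    show Bp.IsRoot (ζ i)
    rw [Polynomial.IsRoot, hBeval]
    exact hζ0 i
  have hdvd : (M.map (fun a => Polynomial.X - Polynomial.C a)).prod ∣ Bp :=
    dvd_trans (Multiset.prod_dvd_prod_of_le (Multiset.map_le_map hMle))
      (Polynomial.prod_multiset_X_sub_C_dvd Bp)
  have hP : (M.map (fun a => Polynomial.X - Polynomial.C a)).prod
      = ∏ i : Fin (n+1), (Polynomial.X - Polynomial.C (ζ i)) := by
    rw [hM, Multiset.map_map, Finset.prod]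
    rfl
  set P : Polynomial ℂ := ∏ i : Fin (n+1), (Polynomial.X - Polynomial.C (ζ i)) with hPdef
  rw [hP] at hdvd
  have hPdeg : P.degree = ((n+1 : ℕ) : WithBot ℕ) := by
    rw [hPdef, Polynomial.degree_prod]
    simp [Polynomial.degree_X_sub_C]
  have hPne : P ≠ 0 := Polynomial.zero_le_degree_iff.mp
    (by rw [hPdeg]; exact_mod_cast Nat.zero_le (n+1))
  obtain ⟨d, hd⟩ := hdvd
  have hd0 : d ≠ 0 := fun h => hBne (by rw [hd, h, mul_zero])
  have hdnat : d.natDegree = 0 := by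
    have h1 : Bp.natDegree = P.natDegree + d.natDegree := Polynomial.natDegree_mul hPne hd0 ▸ by
      rw [hd]
    have h2 : P.natDegree = n + 1 := Polynomial.natDegree_eq_of_degree_eq_some hPdeg
    have h3 : Bp.natDegree ≤ n + 1 := Polynomial.natDegree_le_iff_degree_le.2 hBdeg
    omega
  obtain ⟨cc, hcc⟩ := Polynomial.natDegree_eq_zero.mp hdnat
  have hccne : cc ≠ 0 := fun h => hd0 (by rw [← hcc, h, map_zero])
  intro i j hij
  set q : Polynomial ℂ :=
    (∏ i' ∈ Finset.univ.erase j, (Polynomial.X - Polynomial.C (ζ i'))) * Polynomial.C cc with hqdef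
  have hq : (Polynomial.X - Polynomial.C (ζ j)) * q = Bp := by
    calc (Polynomial.X - Polynomial.C (ζ j)) * q
        = ((Polynomial.X - Polynomial.C (ζ j)) *
            ∏ i' ∈ Finset.univ.erase j, (Polynomial.X - Polynomial.C (ζ i'))) *
            Polynomial.C cc := by rw [hqdef]; ring
      _ = P * Polynomial.C cc := by
          have hPsplit : (Polynomial.X - Polynomial.C (ζ j)) *
              ∏ i' ∈ Finset.univ.erase j, (Polynomial.X - Polynomial.C (ζ i')) = P :=
            Finset.mul_prod_erase Finset.univ
              (fun i' => Polynomial.X - Polynomial.C (ζ i')) (Finset.mem_univ j)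
          rw [hPsplit]
      _ = Bp := by rw [hd, hcc]
  have hq0 : q ≠ 0 := by
    intro h
    rw [h, mul_zero] at hq
    exact hBne hq.symm
  have hqeval0 : ∀ i' : Fin (n+1), i' ≠ j → q.eval (ζ i') = 0 := by
    intro i' hi'
    rw [hqdef, Polynomial.eval_mul, Polynomial.eval_prod]
    rw [Finset.prod_eq_zero (Finset.mem_erase.2 ⟨hi', Finset.mem_univ i'⟩) (by simp)]
    ring
  have hqj : q.eval (ζ j) ≠ 0 := by
    rw [hqdef, Polynomial.eval_mul, Polynomial.eval_prod]
    refine mul_ne_zero (Finset.prod_ne_zero_iff.2 fun i' hi' => ?_) (by simpa using hccne)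
    simp only [Polynomial.eval_sub, Polynomial.eval_X, Polynomial.eval_C]
    exact sub_ne_zero_of_ne fun h => (Finset.mem_erase.1 hi').1 (hζinj h.symm)
  have hqdeg : q.degree < ((n+1 : ℕ) : WithBot ℕ) := by
    have h1 : Bp.natDegree = 1 + q.natDegree := by
      rw [← hq, Polynomial.natDegree_mul (Polynomial.X_sub_C_ne_zero _) hq0,
        Polynomial.natDegree_X_sub_C]
    have h3 : Bp.natDegree ≤ n + 1 := Polynomial.natDegree_le_iff_degree_le.2 hBdeg
    refine lt_of_le_of_lt Polynomial.degree_le_natDegree ?_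
    exact_mod_cast by omega
  set Kd : ℂ := christoffelK φ n (ζ j) (ζ j) with hKddef
  have hKdne : Kd ≠ 0 := (Kself φ hdeg hlead n (ζ j)).1
  set α : ℂ := q.eval (ζ j) * Kd⁻¹ with hα
  have hαne : α ≠ 0 := mul_ne_zero hqj (inv_ne_zero hKdne)
  set g : Polynomial ℂ := q - Polynomial.C α * Kpoly φ n (ζ j) with hgdef
  have hgj : g.eval (ζ j) = 0 := by
    rw [hgdef]
    simp only [Polynomial.eval_sub, Polynomial.eval_mul, Polynomial.eval_C, Kpoly_eval]
    rw [← hKddef, hα]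
    field_simp
    ring
  have hgdeg : g.degree < ((n+1 : ℕ) : WithBot ℕ) := by
    refine lt_of_le_of_lt (Polynomial.degree_sub_le _ _) (max_lt hqdeg ?_)
    refine lt_of_le_of_lt (Polynomial.degree_mul_le _ _) ?_
    calc (Polynomial.C α).degree + (Kpoly φ n (ζ j)).degree
        ≤ 0 + (Kpoly φ n (ζ j)).degree := add_le_add Polynomial.degree_C_le le_rfl
      _ = (Kpoly φ n (ζ j)).degree := zero_add _
      _ < ((n+1 : ℕ) : WithBot ℕ) := Kpoly_degree φ hdeg n (ζ j)
  set r : Polynomial ℂ := g /ₘ (Polynomial.X - Polynomial.C (ζ j)) with hrdef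
  have hr : (Polynomial.X - Polynomial.C (ζ j)) * r = g :=
    (Polynomial.mul_divByMonic_eq_iff_isRoot).2 hgj
  have hwr_deg : ((Polynomial.X - Polynomial.C w) * r).degree < ((n+1 : ℕ) : WithBot ℕ) := by
    by_cases hr0 : r = 0
    · rw [hr0, mul_zero, Polynomial.degree_zero]
      exact WithBot.bot_lt_coe _
    · rw [Polynomial.degree_mul, Polynomial.degree_X_sub_C,
        ← Polynomial.degree_X_sub_C (ζ j), ← Polynomial.degree_mul, hr]
      exact hgdeg
  -- the integral of g * conj g vanishes
  have hcontg : Continuous fun z => g.eval z := g.continuous_aeval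
  have hae_sph : ∀ᵐ z ∂μ, z ∈ Metric.sphere (0:ℂ) 1 := by
    rw [ae_iff]
    convert hμT using 2
    rfl
  have hterm1 : ∫ z, q.eval z * conj (g.eval z) ∂μ = 0 := by
    have hae : (fun z => q.eval z * conj (g.eval z))
        =ᵐ[μ] (fun z => (-conj (ζ j)) *
          (christoffelK φ n w z * conj (((Polynomial.X - Polynomial.C w) * r).eval z))) := by
      filter_upwards [hae_sph] with z hz
      have hz1 : z * conj z = 1 := hsph hz
      have hζ1 : ζ j * conj (ζ j) = 1 := hsph (hζT j)
      have hBz : q.eval z * (z - ζ j) = (1 - conj w * z) * christoffelK φ n w z := by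
        have h := congrArg (Polynomial.eval z) hq
        simp only [Polynomial.eval_mul, Polynomial.eval_sub, Polynomial.eval_X,
          Polynomial.eval_C, hBeval] at h
        rw [paraOrtho] at h
        linear_combination h
      have hgz : g.eval z = (z - ζ j) * r.eval z := by
        rw [← hr]
        simp
      rw [hgz]
      simp only [Polynomial.eval_mul, Polynomial.eval_sub, Polynomial.eval_X, Polynomial.eval_C,
        map_mul, map_sub]
      linear_combination (-(conj z * conj (ζ j) * conj (r.eval z))) * hBz
        + (q.eval z * conj (r.eval z) * conj (ζ j)
            + christoffelK φ n w z * conj (r.eval z) * conj (ζ j) * conj w) * hz1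
        + (-(q.eval z * conj (r.eval z) * conj z)) * hζ1
    rw [integral_congr_ae hae, integral_const_mul,
      repro μ hμT φ hdeg hne horth n w _ hwr_deg]
    simp
  have hterm2 : ∫ z, (Polynomial.C α * Kpoly φ n (ζ j)).eval z * conj (g.eval z) ∂μ = 0 := by
    simp only [Polynomial.eval_mul, Polynomial.eval_C, Kpoly_eval, mul_assoc]
    rw [integral_const_mul, repro μ hμT φ hdeg hne horth n (ζ j) g hgdeg, hgj]
    simp
  have hGG : ∫ z, g.eval z * conj (g.eval z) ∂μ = 0 := by
    have hsplit : (fun z => g.eval z * conj (g.eval z))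
        = fun z => q.eval z * conj (g.eval z)
          - (Polynomial.C α * Kpoly φ n (ζ j)).eval z * conj (g.eval z) := by
      funext z
      rw [hgdef]
      simp only [Polynomial.eval_sub]
      ring
    rw [hsplit, integral_sub, hterm1, hterm2, sub_zero]
    · exact integrable_cont μ hμT (q.continuous_aeval.mul
        (Complex.continuous_conj.comp hcontg))
    · exact integrable_cont μ hμT
        (((Polynomial.C α * Kpoly φ n (ζ j)).continuous_aeval).mul
          (Complex.continuous_conj.comp hcontg))
  -- hence g = 0
  have hg0 : g = 0 := by
    by_contra hgne
    have hre : ∫ z, Complex.normSq (g.eval z) ∂μ = 0 := by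
      have : ∫ z, ((Complex.normSq (g.eval z) : ℝ) : ℂ) ∂μ = 0 := by
        rw [← hGG]
        exact integral_congr_ae (Eventually.of_forall fun z => (Complex.mul_conj _).symm)
      have h2 : ∫ z, ((Complex.normSq (g.eval z) : ℝ) : ℂ) ∂μ
          = ((∫ z, Complex.normSq (g.eval z) ∂μ : ℝ) : ℂ) := integral_ofReal
      rw [h2, Complex.ofReal_eq_zero] at this
      exact this
    have hint : Integrable (fun z => Complex.normSq (g.eval z)) μ :=
      integrable_cont μ hμT (Complex.continuous_normSq.comp hcontg)
    have hae0 := (integral_eq_zero_iff_of_nonneg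
      (fun z => Complex.normSq_nonneg _) hint).mp hre
    have hge : ∀ᵐ z ∂μ, g.eval z = 0 := by
      filter_upwards [hae0] with z hz
      exact Complex.normSq_eq_zero.mp hz
    have hzero : μ {z | g.eval z ≠ 0} = 0 := by
      rw [ae_iff] at hge
      convert hge using 2
    refine hμinf g.roots.toFinset ?_
    refine measure_mono_null ?_ hzero
    intro z hzz
    simp only [Set.mem_compl_iff, Finset.coe_sort_coe, Finset.mem_coe,
      Multiset.mem_toFinset] at hzz
    intro h
    exact hzz ((Polynomial.mem_roots hgne).2 h)
  have hqα : q = Polynomial.C α * Kpoly φ n (ζ j) := by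
    have := sub_eq_zero.mp (hgdef ▸ hg0)
    exact this
  have := congrArg (Polynomial.eval (ζ i)) hqα
  rw [hqeval0 i hij, Polynomial.eval_mul, Polynomial.eval_C, Kpoly_eval] at this
  exact (mul_eq_zero.mp this.symm).resolve_left hαne


end SumSqAux

open SumSqAux

/-- The fundamental polynomials satisfy `∑_{j=0}^n ∫_T |ℓ_{jn}|² dμ = μ(T)`. -/
theorem sum_sq_norm_ellFun
    (μ : Measure ℂ) [IsFiniteMeasure μ]
    (hμT : μ (Metric.sphere (0 : ℂ) 1)ᶜ = 0)
    (hμinf : ∀ s : Finset ℂ, μ ((s : Set ℂ)ᶜ) ≠ 0)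
    (φ : ℕ → Polynomial ℂ)
    (hdeg : ∀ k, (φ k).degree = (k : ℕ))
    (hlead : ∀ k, 0 < ((φ k).leadingCoeff).re ∧ ((φ k).leadingCoeff).im = 0)
    (horth : ∀ k m, ∫ z, (φ k).eval z * conj ((φ m).eval z) ∂μ
        = if k = m then 1 else 0)
    (n : ℕ) (w : ℂ) (hw : w ∈ Metric.sphere (0 : ℂ) 1)
    (ζ : Fin (n + 1) → ℂ)
    (hζT : ∀ j, ζ j ∈ Metric.sphere (0 : ℂ) 1)
    (hζinj : Function.Injective ζ)
    (hζ0 : ∀ j, paraOrtho φ n w (ζ j) = 0) :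
    ∑ j : Fin (n + 1), ∫ z, ‖ellFun φ n ζ j z‖ ^ 2 ∂μ
      = (μ Set.univ).toReal := by
  classical
  have hne : ∀ k, (φ k).leadingCoeff ≠ 0 := by
    intro k h
    have := (hlead k).1
    rw [h] at this
    simp at this
  set Kd : Fin (n+1) → ℂ := fun j => christoffelK φ n (ζ j) (ζ j) with hKddef
  have hKdne : ∀ j, Kd j ≠ 0 := fun j => (Kself φ hdeg hlead n (ζ j)).1
  have hKdconj : ∀ j, conj (Kd j) = Kd j := fun j => (Kself φ hdeg hlead n (ζ j)).2
  have hKzero := kernel_offdiag μ hμT hμinf φ hdeg hlead horth n w hw ζ hζT hζinj hζ0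
  have hKcont : ∀ a : ℂ, Continuous fun z => christoffelK φ n a z := by
    intro a
    simp only [christoffelK]
    exact continuous_finset_sum _ fun j _ => continuous_const.mul (φ j).continuous_aeval
  have hIK : ∀ j, ∫ z, christoffelK φ n (ζ j) z * conj (christoffelK φ n (ζ j) z) ∂μ = Kd j := by
    intro j
    have h := repro μ hμT φ hdeg hne horth n (ζ j) (Kpoly φ n (ζ j)) (Kpoly_degree φ hdeg n (ζ j))
    simp only [Kpoly_eval] at h
    rw [h, hKdconj j]
  have hcj : ∀ j, ((∫ z, ‖ellFun φ n ζ j z‖ ^ 2 ∂μ : ℝ) : ℂ) = (Kd j)⁻¹ := by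
    intro j
    have h2 : ∫ z, ((‖ellFun φ n ζ j z‖ ^ 2 : ℝ) : ℂ) ∂μ
        = ((∫ z, ‖ellFun φ n ζ j z‖ ^ 2 ∂μ : ℝ) : ℂ) := integral_ofReal
    rw [← h2]
    have hfun : (fun z => ((‖ellFun φ n ζ j z‖ ^ 2 : ℝ) : ℂ))
        = fun z => (Kd j)⁻¹ * ((Kd j)⁻¹ *
            (christoffelK φ n (ζ j) z * conj (christoffelK φ n (ζ j) z))) := by
      funext z
      rw [Complex.sq_norm, ← Complex.mul_conj]
      rw [ellFun, div_eq_mul_inv, map_mul, map_inv₀, hKdconj j]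
      rw [show christoffelK φ n (ζ j) (ζ j) = Kd j from rfl]
      ring
    rw [hfun, integral_const_mul, integral_const_mul, hIK j]
    field_simp
  set SP : Polynomial ℂ := ∑ j : Fin (n+1), Polynomial.C ((Kd j)⁻¹) * Kpoly φ n (ζ j) with hSPdef
  have hterm_deg : ∀ j : Fin (n+1),
      (Polynomial.C ((Kd j)⁻¹) * Kpoly φ n (ζ j)).degree < ((n+1:ℕ) : WithBot ℕ) := by
    intro j
    refine lt_of_le_of_lt (Polynomial.degree_mul_le _ _) ?_
    calc (Polynomial.C ((Kd j)⁻¹)).degree + (Kpoly φ n (ζ j)).degree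
        ≤ 0 + (Kpoly φ n (ζ j)).degree := add_le_add Polynomial.degree_C_le le_rfl
      _ = (Kpoly φ n (ζ j)).degree := zero_add _
      _ < ((n+1:ℕ) : WithBot ℕ) := Kpoly_degree φ hdeg n (ζ j)
  have hSPdeg : SP.degree < ((n+1:ℕ) : WithBot ℕ) := by
    refine lt_of_le_of_lt (Polynomial.degree_sum_le _ _) ?_
    rw [Finset.sup_lt_iff (by exact_mod_cast WithBot.bot_lt_coe (n+1))]
    exact fun j _ => hterm_deg j
  have hSPeval : ∀ i, SP.eval (ζ i) = 1 := by
    intro i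
    rw [hSPdef, Polynomial.eval_finset_sum]
    rw [Finset.sum_eq_single i]
    · rw [Polynomial.eval_mul, Polynomial.eval_C, Kpoly_eval]
      exact inv_mul_cancel₀ (hKdne i)
    · intro j _ hji
      rw [Polynomial.eval_mul, Polynomial.eval_C, Kpoly_eval, hKzero i j (Ne.symm hji), mul_zero]
    · intro h
      exact absurd (Finset.mem_univ i) h
  have hSP1 : SP = 1 := by
    have h0 : SP - 1 = 0 := by
      by_cases hS : SP - 1 = 0
      · exact hS
      refine Polynomial.eq_zero_of_natDegree_lt_card_of_eval_eq_zero _ hζinj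
        (fun i => by simp [hSPeval i]) ?_
      rw [Fintype.card_fin]
      have hd : (SP - 1).degree < ((n+1:ℕ) : WithBot ℕ) := by
        refine lt_of_le_of_lt (Polynomial.degree_sub_le _ _) (max_lt hSPdeg ?_)
        refine lt_of_le_of_lt Polynomial.degree_one_le ?_
        exact_mod_cast Nat.zero_lt_succ n
      rw [Polynomial.degree_eq_natDegree hS] at hd
      exact_mod_cast hd
    exact sub_eq_zero.mp h0
  have hone : ∀ j, ∫ z, christoffelK φ n (ζ j) z ∂μ = 1 := by
    intro j
    have h := repro μ hμT φ hdeg hne horth n (ζ j) 1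
      (by rw [Polynomial.degree_one]; exact_mod_cast Nat.zero_lt_succ n)
    simpa using h
  have hsum : ∑ j : Fin (n+1), (Kd j)⁻¹ = (((μ Set.univ).toReal : ℝ) : ℂ) := by
    calc ∑ j : Fin (n+1), (Kd j)⁻¹
        = ∑ j : Fin (n+1), ∫ z, (Kd j)⁻¹ * christoffelK φ n (ζ j) z ∂μ := by
          refine Finset.sum_congr rfl fun j _ => ?_
          rw [integral_const_mul, hone j, mul_one]
      _ = ∫ z, ∑ j : Fin (n+1), (Kd j)⁻¹ * christoffelK φ n (ζ j) z ∂μ :=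
          (integral_finset_sum _ (fun j _ =>
            integrable_cont μ hμT (continuous_const.mul (hKcont (ζ j))))).symm
      _ = ∫ z, SP.eval z ∂μ := by
          refine integral_congr_ae (Eventually.of_forall fun z => ?_)
          simp only [hSPdef, Polynomial.eval_finset_sum, Polynomial.eval_mul,
            Polynomial.eval_C, Kpoly_eval]
      _ = ∫ z, (1 : ℂ) ∂μ := by rw [hSP1]; simp
      _ = (((μ Set.univ).toReal : ℝ) : ℂ) := by
          rw [integral_const]
          simp [Complex.real_smul, Measure.real]
  apply Complex.ofReal_injective
  calc ((∑ j : Fin (n + 1), ∫ z, ‖ellFun φ n ζ j z‖ ^ 2 ∂μ : ℝ) : ℂ)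
      = ∑ j : Fin (n + 1), ((∫ z, ‖ellFun φ n ζ j z‖ ^ 2 ∂μ : ℝ) : ℂ) := by
        push_cast
        rfl
    _ = ∑ j : Fin (n+1), (Kd j)⁻¹ := Finset.sum_congr rfl fun j _ => hcj j
    _ = (((μ Set.univ).toReal : ℝ) : ℂ) := hsum
end
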